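/- arXiv:0908.3157 — 7 statements merged into one kernel-verified Lean document; each statement's English description precedes it below -/
import Mathlib

section
/- Let ρ be a density matrix on ℂ^{dA} ⊗ ℂ^{dB}, let (v_j)_{j<dA} be an orthonormal basis of ℂ^{dA}, and set P_j = v_j v_j*. Then ρ = Σ_j (P_j ⊗ I_{dB}) ρ (P_j ⊗ I_{dB}) if and only if there exist nonnegative reals p_j with Σ_j p_j = 1 and dB×dB density matrices σ_j such that ρ = Σ_j p_j P_j ⊗ σ_j. (I.e., invariance of ρ under the local von Neumann measurement {P_j} is equivalent to the block-diagonal zero-discord form in that basis.) -/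
open Matrix MeasureTheory
open scoped Kronecker ComplexOrder

/-- A density matrix: positive semidefinite with unit trace. -/
def IsDensityMatrix {n : Type*} [Fintype n] (ρ : Matrix n n ℂ) : Prop :=
  ρ.PosSemidef ∧ ρ.trace = 1

/-- Partial trace over the second subsystem. -/
noncomputable def ptraceB {dA dB : ℕ} (ρ : Matrix (Fin dA × Fin dB) (Fin dA × Fin dB) ℂ) :
    Matrix (Fin dA) (Fin dA) ℂ :=
  Matrix.of fun a a' => ∑ b, ρ (a, b) (a', b)

/-- Zero-discord (classical-quantum) states: block diagonal in some
orthonormal local basis of the first subsystem. -/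
def IsZeroDiscord {dA dB : ℕ} (ρ : Matrix (Fin dA × Fin dB) (Fin dA × Fin dB) ℂ) : Prop :=
  ∃ (v : Fin dA → (Fin dA → ℂ)) (p : Fin dA → ℝ)
    (σ : Fin dA → Matrix (Fin dB) (Fin dB) ℂ),
      (∀ j k, star (v j) ⬝ᵥ v k = if j = k then 1 else 0) ∧
      (∀ j, 0 ≤ p j) ∧ (∑ j, p j = 1) ∧
      (∀ j, IsDensityMatrix (σ j)) ∧
      ρ = ∑ j, (p j : ℂ) • (Matrix.vecMulVec (v j) (star (v j)) ⊗ₖ σ j)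

lemma aux_vmv_mul {n : Type*} [Fintype n] (a b c d : n → ℂ) :
    vecMulVec a b * vecMulVec c d = (b ⬝ᵥ c) • vecMulVec a d := by
  ext i j
  simp only [mul_apply, vecMulVec_apply, Matrix.smul_apply, dotProduct, smul_eq_mul, Finset.sum_mul]
  exact Finset.sum_congr rfl fun k _ => by ring

lemma aux_psd_trace_zero {n : Type*} [Fintype n] [DecidableEq n] {M : Matrix n n ℂ}
    (hM : M.PosSemidef) (h : M.trace = 0) : M = 0 := by
  exact hM.trace_eq_zero_iff.mp h

lemma aux_key {dA dB : ℕ} (ρ : Matrix (Fin dA × Fin dB) (Fin dA × Fin dB) ℂ)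
    (w : Fin dA → ℂ) :
    (vecMulVec w (star w) ⊗ₖ (1 : Matrix (Fin dB) (Fin dB) ℂ)) * ρ *
      (vecMulVec w (star w) ⊗ₖ (1 : Matrix (Fin dB) (Fin dB) ℂ)) =
    vecMulVec w (star w) ⊗ₖ
      (Matrix.of fun b b' => ∑ c, ∑ c', (starRingEnd ℂ) (w c) * ρ (c, b) (c', b') * w c') := by
  ext ⟨a, b⟩ ⟨a', b'⟩
  simp only [mul_apply, kroneckerMap_apply, vecMulVec_apply, Pi.star_apply, one_apply,
    Fintype.sum_prod_type, of_apply, mul_ite, ite_mul, mul_zero, zero_mul, mul_one, one_mul,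
    Finset.sum_ite_eq, Finset.sum_ite_eq', Finset.mem_univ, if_true, Finset.mul_sum,
    Finset.sum_mul, RCLike.star_def]
  rw [Finset.sum_comm]
  refine Finset.sum_congr rfl fun c _ => Finset.sum_congr rfl fun c' _ => by ring

lemma aux_M_psd {dA dB : ℕ} {ρ : Matrix (Fin dA × Fin dB) (Fin dA × Fin dB) ℂ}
    (hρ : ρ.PosSemidef) (w : Fin dA → ℂ) :
    (Matrix.of fun b b' => ∑ c, ∑ c',
      (starRingEnd ℂ) (w c) * ρ (c, b) (c', b') * w c' :
      Matrix (Fin dB) (Fin dB) ℂ).PosSemidef := by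
  have : (Matrix.of fun b b' => ∑ c, ∑ c',
      (starRingEnd ℂ) (w c) * ρ (c, b) (c', b') * w c' :
      Matrix (Fin dB) (Fin dB) ℂ) =
      (Matrix.of fun (cd : Fin dA × Fin dB) b => w cd.1 * (if cd.2 = b then 1 else 0))ᴴ * ρ *
      (Matrix.of fun (cd : Fin dA × Fin dB) b => w cd.1 * (if cd.2 = b then 1 else 0)) := by
    ext b b'
    simp only [mul_apply, conjTranspose_apply, of_apply, Fintype.sum_prod_type, star_mul',
      apply_ite (starRingEnd ℂ), star_one, star_zero, mul_ite, ite_mul, mul_zero, zero_mul,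
      mul_one, one_mul, Finset.sum_ite_eq, Finset.sum_ite_eq', Finset.mem_univ, if_true,
      Finset.mul_sum, Finset.sum_mul, RCLike.star_def, map_zero]
    exact Finset.sum_comm
  rw [this]
  exact hρ.conjTranspose_mul_mul_same _

lemma aux_trace_real {n : Type*} [Fintype n] [DecidableEq n] {M : Matrix n n ℂ}
    (hM : M.PosSemidef) : M.trace = ((M.trace.re : ℝ) : ℂ) ∧ 0 ≤ M.trace.re := by
  have hd : ∀ b, 0 ≤ M b b := fun b => by
    have := hM.dotProduct_mulVec_nonneg (Pi.single b 1)
    simpa [dotProduct, mulVec, Pi.single_apply] using this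
  have h1 : ∀ b, (M b b).im = 0 := fun b => ((Complex.nonneg_iff).mp (hd b)).2.symm
  have h2 : ∀ b, 0 ≤ (M b b).re := fun b => ((Complex.nonneg_iff).mp (hd b)).1
  constructor
  · apply Complex.ext <;> simp [Matrix.trace, Matrix.diag, Complex.re_sum, Complex.im_sum, h1]
  · simp only [Matrix.trace, Matrix.diag, Complex.re_sum]
    exact Finset.sum_nonneg fun b _ => h2 b

lemma aux_psd_smul {n : Type*} [Fintype n] {M : Matrix n n ℂ}
    (hM : M.PosSemidef) {c : ℝ} (hc : 0 ≤ c) : ((c : ℂ) • M).PosSemidef := by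
  refine Matrix.PosSemidef.of_dotProduct_mulVec_nonneg ?_ ?_
  · show ((c : ℂ) • M)ᴴ = (c : ℂ) • M
    rw [conjTranspose_smul, hM.1.eq]
    simp [Complex.conj_ofReal]
  · intro x
    rw [smul_mulVec, dotProduct_smul, smul_eq_mul]
    exact mul_nonneg (by exact_mod_cast hc) (hM.dotProduct_mulVec_nonneg x)

/-- A density matrix is invariant under a local von Neumann
measurement `{P_j = v_j v_j*}` on `A` if and only if it has the block-diagonal
zero-discord form `Σ_j p_j P_j ⊗ σ_j` in that basis. -/
theorem measurement_invariance_iff_block_diagonal (dA dB : ℕ) (hdA : 0 < dA) (hdB : 0 < dB)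
    (ρ : Matrix (Fin dA × Fin dB) (Fin dA × Fin dB) ℂ) (hρ : IsDensityMatrix ρ)
    (v : Fin dA → (Fin dA → ℂ))
    (hv : ∀ j k, star (v j) ⬝ᵥ v k = if j = k then 1 else 0) :
    (ρ = ∑ j, (Matrix.vecMulVec (v j) (star (v j)) ⊗ₖ (1 : Matrix (Fin dB) (Fin dB) ℂ)) * ρ *
        (Matrix.vecMulVec (v j) (star (v j)) ⊗ₖ (1 : Matrix (Fin dB) (Fin dB) ℂ))) ↔
    (∃ (p : Fin dA → ℝ) (σ : Fin dA → Matrix (Fin dB) (Fin dB) ℂ),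
      (∀ j, 0 ≤ p j) ∧ (∑ j, p j = 1) ∧ (∀ j, IsDensityMatrix (σ j)) ∧
      ρ = ∑ j, (p j : ℂ) • (Matrix.vecMulVec (v j) (star (v j)) ⊗ₖ σ j)) := by
  classical
  set P : Fin dA → Matrix (Fin dA) (Fin dA) ℂ :=
    fun j => vecMulVec (v j) (star (v j)) with hP
  constructor
  · intro hinv
    set M : Fin dA → Matrix (Fin dB) (Fin dB) ℂ := fun j =>
      Matrix.of fun b b' => ∑ c, ∑ c', (starRingEnd ℂ) (v j c) * ρ (c, b) (c', b') * v j c'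
      with hMdef
    have hMpsd : ∀ j, (M j).PosSemidef := fun j => aux_M_psd hρ.1 (v j)
    have hρM : ρ = ∑ j, P j ⊗ₖ M j := by
      rw [hinv]
      exact Finset.sum_congr rfl fun j _ => aux_key ρ (v j)
    have htr : ∀ j, (M j).trace = (((M j).trace.re : ℝ) : ℂ) :=
      fun j => (aux_trace_real (hMpsd j)).1
    have htrnn : ∀ j, 0 ≤ (M j).trace.re := fun j => (aux_trace_real (hMpsd j)).2
    have hPtr : ∀ j, (P j).trace = 1 := by
      intro j
      have h := hv j j
      simp only [if_pos rfl, dotProduct, Pi.star_apply, if_true, eq_self_iff_true] at h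
      rw [hP]
      simp only [Matrix.trace, Matrix.diag, vecMulVec_apply, Pi.star_apply]
      rw [← h]
      exact Finset.sum_congr rfl fun a _ => mul_comm _ _
    have hsum : ∑ j, (M j).trace = 1 := by
      have h := hρ.2
      rw [hρM] at h
      rw [← h, Matrix.trace_sum]
      exact Finset.sum_congr rfl fun j _ => by rw [Matrix.trace_kronecker, hPtr j, one_mul]
    set p : Fin dA → ℝ := fun j => (M j).trace.re with hpdef
    set σ : Fin dA → Matrix (Fin dB) (Fin dB) ℂ := fun j =>
      if p j = 0 then (Complex.ofReal (dB : ℝ)⁻¹) • (1 : Matrix (Fin dB) (Fin dB) ℂ)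
      else (Complex.ofReal (p j)⁻¹) • M j with hσdef
    have hσ0 : ∀ j, p j = 0 →
        σ j = (Complex.ofReal (dB : ℝ)⁻¹) • (1 : Matrix (Fin dB) (Fin dB) ℂ) :=
      fun j h => if_pos h
    have hσ1 : ∀ j, p j ≠ 0 → σ j = (Complex.ofReal (p j)⁻¹) • M j :=
      fun j h => if_neg h
    have hpsum : ∑ j, p j = 1 := by
      have := congrArg Complex.re hsum
      simpa [Complex.re_sum] using this
    refine ⟨p, σ, htrnn, hpsum, ?_, ?_⟩
    · intro j
      by_cases h : p j = 0
      · rw [hσ0 j h]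
        constructor
        · exact aux_psd_smul Matrix.PosSemidef.one (by positivity)
        · rw [Matrix.trace_smul]
          simp only [Matrix.trace_one, Fintype.card_fin, smul_eq_mul]
          rw [← Complex.ofReal_natCast, ← Complex.ofReal_mul, inv_mul_cancel₀
            (by exact_mod_cast hdB.ne' : (dB : ℝ) ≠ 0), Complex.ofReal_one]
      · rw [hσ1 j h]
        constructor
        · exact aux_psd_smul (hMpsd j)
            (inv_nonneg.mpr (htrnn j))
        · rw [Matrix.trace_smul, smul_eq_mul, htr j, ← Complex.ofReal_mul,
            inv_mul_cancel₀ h, Complex.ofReal_one]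
    · rw [hρM]
      refine Finset.sum_congr rfl fun j _ => ?_
      by_cases h : p j = 0
      · have hM0 : M j = 0 := by
          apply aux_psd_trace_zero (hMpsd j)
          rw [htr j]
          exact_mod_cast h
        simp [h, hM0]
      · rw [hσ1 j h, Matrix.kronecker_smul, smul_smul, ← Complex.ofReal_mul,
          mul_inv_cancel₀ h, Complex.ofReal_one, one_smul]
  · rintro ⟨p, σ, hp0, hp1, hσ, hform⟩
    have hPP : ∀ k j, P k * P j = if k = j then vecMulVec (v k) (star (v j)) else 0 := by
      intro k j
      rw [hP]
      simp only
      rw [aux_vmv_mul, hv]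
      by_cases h : k = j <;> simp [h]
    have hterm : ∀ k, (P k ⊗ₖ (1 : Matrix (Fin dB) (Fin dB) ℂ)) * ρ *
        (P k ⊗ₖ (1 : Matrix (Fin dB) (Fin dB) ℂ)) = (p k : ℂ) • (P k ⊗ₖ σ k) := by
      intro k
      rw [hform, Finset.mul_sum, Finset.sum_mul]
      rw [Finset.sum_eq_single k]
      · rw [mul_smul_comm, smul_mul_assoc, ← mul_kronecker_mul, ← mul_kronecker_mul,
          one_mul, mul_one, hPP k k, if_pos rfl]
        have : vecMulVec (v k) (star (v k)) * P k = P k := by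
          rw [hP]
          simp only
          rw [aux_vmv_mul, hv, if_pos rfl, one_smul]
        rw [this]
      · intro j _ hjk
        rw [mul_smul_comm, smul_mul_assoc, ← mul_kronecker_mul, ← mul_kronecker_mul,
          one_mul, mul_one, hPP k j, if_neg (Ne.symm hjk)]
        simp
      · intro h
        exact absurd (Finset.mem_univ k) h
    calc ρ = ∑ k, (p k : ℂ) • (P k ⊗ₖ σ k) := hform
      _ = ∑ j, (P j ⊗ₖ (1 : Matrix (Fin dB) (Fin dB) ℂ)) * ρ *
            (P j ⊗ₖ (1 : Matrix (Fin dB) (Fin dB) ℂ)) :=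
        (Finset.sum_congr rfl fun k _ => (hterm k).symm)
end

section
/- Assume dA ≥ 2 and dB ≥ 2. Let V be the finite-dimensional real vector space of traceless Hermitian d×d complex matrices (indexed by Fin dA × Fin dB) and let μ be an additive Haar measure on V. Then the set {X ∈ V : [I/d + X, (Tr_B(I/d + X)) ⊗ I_{dB}] = 0} is a μ-null set. In particular, the set C₀ of density matrices commuting with their reduced state has measure zero within the affine space of Hermitian trace-one matrices. -/
open Matrix MeasureTheory
open scoped Kronecker ComplexOrder

/-- The real vector space of traceless Hermitian `d × d` matrices. -/
noncomputable def tracelessHermitian (dA dB : ℕ) :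
    Submodule ℝ (Matrix (Fin dA × Fin dB) (Fin dA × Fin dB) ℂ) where
  carrier := {X | X.IsHermitian ∧ X.trace = 0}
  add_mem' := fun ha hb => ⟨ha.1.add hb.1, by simp [Matrix.trace_add, ha.2, hb.2]⟩
  zero_mem' := ⟨Matrix.isHermitian_zero, by simp⟩
  smul_mem' := fun c X hX =>
    ⟨by rw [Matrix.IsHermitian, Matrix.conjTranspose_smul, star_trivial, hX.1.eq],
     by rw [Matrix.trace_smul, hX.2, smul_zero]⟩

namespace C0Aux

/-- diagonal sign matrix: `+1` at `i`, `−1` at `j`. -/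
def ds {n : ℕ} (i j : Fin n) : Matrix (Fin n) (Fin n) ℂ :=
  Matrix.of fun a a' =>
    if a = a' then ((if a = i then 1 else 0) - (if a = j then 1 else 0)) else 0

/-- symmetric off-diagonal matrix with `1` at `(i,j)` and `(j,i)`. -/
def od {n : ℕ} (i j : Fin n) : Matrix (Fin n) (Fin n) ℂ :=
  Matrix.of fun a a' => if a = i ∧ a' = j ∨ a = j ∧ a' = i then 1 else 0

lemma ds_herm {n : ℕ} (i j : Fin n) : (ds i j).IsHermitian := by
  ext a a'
  by_cases h : a = a'
  · subst h; simp [ds, conjTranspose_apply, apply_ite (star : ℂ → ℂ)]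
  · simp [ds, conjTranspose_apply, h, Ne.symm h]

lemma od_herm {n : ℕ} (i j : Fin n) : (od i j).IsHermitian := by
  ext a a'
  by_cases h1 : a' = i ∧ a = j ∨ a' = j ∧ a = i <;>
    · have h2 : (a = i ∧ a' = j ∨ a = j ∧ a' = i) ↔ (a' = i ∧ a = j ∨ a' = j ∧ a = i) := by
        tauto
      simp [od, conjTranspose_apply, h1, h2, apply_ite (star : ℂ → ℂ)]

lemma ds_trace {n : ℕ} (i j : Fin n) : (ds i j).trace = 0 := by
  simp [ds, trace, diag, Finset.sum_sub_distrib]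

lemma ptraceB_kron {dA dB : ℕ} (M : Matrix (Fin dA) (Fin dA) ℂ)
    (N : Matrix (Fin dB) (Fin dB) ℂ) : ptraceB (M ⊗ₖ N) = N.trace • M := by
  ext a a'
  simp [ptraceB, trace, diag, Finset.mul_sum, mul_comm]

lemma ptraceB_add {dA dB : ℕ} (M N : Matrix (Fin dA × Fin dB) (Fin dA × Fin dB) ℂ) :
    ptraceB (M + N) = ptraceB M + ptraceB N := by
  ext a a'; simp [ptraceB, Finset.sum_add_distrib]

lemma ptraceB_smul {dA dB : ℕ} (s : ℂ) (M : Matrix (Fin dA × Fin dB) (Fin dA × Fin dB) ℂ) :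
    ptraceB (s • M) = s • ptraceB M := by
  ext a a'; simp [ptraceB, Finset.mul_sum]

/-- the commutator of a matrix with its reduced state, as a bilinear expression. -/
noncomputable def com {dA dB : ℕ} (P Q : Matrix (Fin dA × Fin dB) (Fin dA × Fin dB) ℂ) :
    Matrix (Fin dA × Fin dB) (Fin dA × Fin dB) ℂ :=
  P * (ptraceB Q ⊗ₖ (1 : Matrix (Fin dB) (Fin dB) ℂ))
    - (ptraceB Q ⊗ₖ (1 : Matrix (Fin dB) (Fin dB) ℂ)) * P

lemma com_expand {dA dB : ℕ} (A W : Matrix (Fin dA × Fin dB) (Fin dA × Fin dB) ℂ) (s : ℂ) :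
    com (A + s • W) (A + s • W)
      = com A A + s • (com A W + com W A) + (s * s) • com W W := by
  simp only [com, ptraceB_add, ptraceB_smul, add_kronecker, smul_kronecker,
    mul_add, add_mul, Matrix.mul_smul, Matrix.smul_mul]
  module

/-- the witness direction. -/
noncomputable def wit {dA dB : ℕ} (a₀ a₁ : Fin dA) (b₀ b₁ : Fin dB) :
    Matrix (Fin dA × Fin dB) (Fin dA × Fin dB) ℂ :=
  ds a₀ a₁ ⊗ₖ (1 : Matrix (Fin dB) (Fin dB) ℂ) + od a₀ a₁ ⊗ₖ ds b₀ b₁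

lemma kron_conjTranspose {dA dB : ℕ} (M : Matrix (Fin dA) (Fin dA) ℂ)
    (N : Matrix (Fin dB) (Fin dB) ℂ) : (M ⊗ₖ N)ᴴ = Mᴴ ⊗ₖ Nᴴ := by
  ext p q
  simp [conjTranspose_apply, mul_comm]

lemma wit_herm {dA dB : ℕ} (a₀ a₁ : Fin dA) (b₀ b₁ : Fin dB) :
    (wit a₀ a₁ b₀ b₁).IsHermitian := by
  unfold Matrix.IsHermitian
  rw [wit, conjTranspose_add, kron_conjTranspose, kron_conjTranspose,
    (ds_herm a₀ a₁).eq, (ds_herm b₀ b₁).eq, (od_herm a₀ a₁).eq, conjTranspose_one]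

lemma wit_trace {dA dB : ℕ} (a₀ a₁ : Fin dA) (b₀ b₁ : Fin dB) :
    (wit a₀ a₁ b₀ b₁).trace = 0 := by
  rw [wit, trace_add, trace_kronecker, trace_kronecker, ds_trace, ds_trace]
  ring

lemma com_wit_entry {dA dB : ℕ} (a₀ a₁ : Fin dA) (b₀ b₁ : Fin dB)
    (ha : a₀ ≠ a₁) (hb : b₀ ≠ b₁) :
    com (wit a₀ a₁ b₀ b₁) (wit a₀ a₁ b₀ b₁) ((a₀, b₀)) ((a₁, b₀)) = -2 * dB := by
  have h1 : ptraceB (wit a₀ a₁ b₀ b₁) = (dB : ℂ) • ds a₀ a₁ := by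
    simp [wit, ptraceB_add, ptraceB_kron, ds_trace, Matrix.trace_one]
  rw [com, h1, smul_kronecker, Matrix.mul_smul, Matrix.smul_mul]
  have hsub : ∀ (P Q : Matrix (Fin dA) (Fin dA) ℂ) (N : Matrix (Fin dB) (Fin dB) ℂ),
      P ⊗ₖ N - Q ⊗ₖ N = (P - Q) ⊗ₖ N := by
    intro P Q N; ext p q; simp [sub_mul]
  have h2 : wit a₀ a₁ b₀ b₁ * (ds a₀ a₁ ⊗ₖ (1 : Matrix (Fin dB) (Fin dB) ℂ))
      - (ds a₀ a₁ ⊗ₖ (1 : Matrix (Fin dB) (Fin dB) ℂ)) * wit a₀ a₁ b₀ b₁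
      = (od a₀ a₁ * ds a₀ a₁ - ds a₀ a₁ * od a₀ a₁) ⊗ₖ ds b₀ b₁ := by
    simp only [wit, add_mul, mul_add, ← mul_kronecker_mul, Matrix.mul_one, Matrix.one_mul]
    rw [← hsub]
    abel
  rw [Matrix.sub_apply, ← Matrix.sub_apply _ _ ((a₀, b₀)) ((a₁, b₀)), ← smul_sub, h2]
  have hod : (od a₀ a₁ * ds a₀ a₁) a₀ a₁ = -1 := by
    rw [Matrix.mul_apply, Finset.sum_eq_single a₁]
    · simp [od, ds, ha, Ne.symm ha]
    · intro k _ hk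
      simp [ds, hk]
    · simp
  have hds : (ds a₀ a₁ * od a₀ a₁) a₀ a₁ = 1 := by
    rw [Matrix.mul_apply, Finset.sum_eq_single a₀]
    · simp [od, ds, ha, Ne.symm ha]
    · intro k _ hk
      simp [ds, Ne.symm hk]
    · simp
  rw [Matrix.smul_apply, kroneckerMap_apply, Matrix.sub_apply, hod, hds]
  simp [ds, hb]
  ring

/-- Along a line in a direction whose self-commutator entry is nonzero, the
commutation condition holds only for finitely many parameters. -/
lemma line_finite {dA dB : ℕ} (A₀ W : Matrix (Fin dA × Fin dB) (Fin dA × Fin dB) ℂ)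
    (i₀ i₁ : Fin dA × Fin dB) (hc2 : com W W i₀ i₁ ≠ 0) :
    {t : ℝ | com (A₀ + (t : ℂ) • W) (A₀ + (t : ℂ) • W) = 0}.Finite := by
  classical
  set p : Polynomial ℂ :=
    Polynomial.C (com A₀ A₀ i₀ i₁)
      + Polynomial.C ((com A₀ W + com W A₀) i₀ i₁) * Polynomial.X
      + Polynomial.C (com W W i₀ i₁) * Polynomial.X ^ 2 with hp_def
  have hp : p ≠ 0 := by
    intro h
    apply hc2
    have := congrArg (fun q : Polynomial ℂ => q.coeff 2) h
    simpa [hp_def, Polynomial.coeff_C] using this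
  have hsub : {t : ℝ | com (A₀ + (t : ℂ) • W) (A₀ + (t : ℂ) • W) = 0}
      ⊆ (fun t : ℝ => (t : ℂ)) ⁻¹' {z | p.IsRoot z} := by
    intro t ht
    have h0 := congrFun (congrFun (ht.trans rfl ▸ (com_expand A₀ W (t : ℂ)) ▸ rfl : (0 : Matrix _ _ ℂ) = com A₀ A₀ + (t:ℂ) • (com A₀ W + com W A₀) + ((t:ℂ) * (t:ℂ)) • com W W) i₀) i₁
    simp only [Set.mem_preimage, Set.mem_setOf_eq, Polynomial.IsRoot, hp_def]
    simp only [Matrix.add_apply, Matrix.smul_apply, Matrix.zero_apply, smul_eq_mul] at h0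
    simp only [Polynomial.eval_add, Polynomial.eval_mul, Polynomial.eval_C, Polynomial.eval_X,
      Polynomial.eval_pow, Matrix.add_apply]
    rw [eq_comm] at h0
    linear_combination h0
  exact Set.Finite.subset
    ((Polynomial.finite_setOf_isRoot hp).preimage
      (Set.injOn_of_injective Complex.ofReal_injective)) hsub

end C0Aux

set_option maxHeartbeats 2000000 in
set_option synthInstance.maxHeartbeats 400000 in
/-- For `dA, dB ≥ 2`, the set of traceless Hermitian
perturbations `X` such that `I/d + X` commutes with its reduced state
(tensored with the identity) is a null set for any additive Haar measure on
the space of traceless Hermitian matrices; hence `C₀` has measure zero within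
the affine space of Hermitian trace-one matrices. -/
theorem C0_measure_zero (dA dB : ℕ) (hdA : 2 ≤ dA) (hdB : 2 ≤ dB)
    [MeasurableSpace (tracelessHermitian dA dB)]
    [BorelSpace (tracelessHermitian dA dB)]
    (μ : Measure (tracelessHermitian dA dB)) [μ.IsAddHaarMeasure] :
    μ {X : tracelessHermitian dA dB |
      ((((dA * dB : ℕ) : ℂ))⁻¹ • (1 : Matrix (Fin dA × Fin dB) (Fin dA × Fin dB) ℂ)
          + (X : Matrix (Fin dA × Fin dB) (Fin dA × Fin dB) ℂ)) *
        (ptraceB ((((dA * dB : ℕ) : ℂ))⁻¹ • 1 + (X : Matrix (Fin dA × Fin dB) (Fin dA × Fin dB) ℂ))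
          ⊗ₖ (1 : Matrix (Fin dB) (Fin dB) ℂ)) =
      (ptraceB ((((dA * dB : ℕ) : ℂ))⁻¹ • 1 + (X : Matrix (Fin dA × Fin dB) (Fin dA × Fin dB) ℂ))
          ⊗ₖ (1 : Matrix (Fin dB) (Fin dB) ℂ)) *
        ((((dA * dB : ℕ) : ℂ))⁻¹ • (1 : Matrix (Fin dA × Fin dB) (Fin dA × Fin dB) ℂ)
          + (X : Matrix (Fin dA × Fin dB) (Fin dA × Fin dB) ℂ))} = 0 := by
  classical
  open C0Aux in
  set c : ℂ := (((dA * dB : ℕ) : ℂ))⁻¹ with hc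
  set S : Set (tracelessHermitian dA dB) := {X : tracelessHermitian dA dB |
      (c • 1 + (X : Matrix (Fin dA × Fin dB) (Fin dA × Fin dB) ℂ)) *
        (ptraceB (c • 1 + (X : Matrix (Fin dA × Fin dB) (Fin dA × Fin dB) ℂ))
          ⊗ₖ (1 : Matrix (Fin dB) (Fin dB) ℂ)) =
      (ptraceB (c • 1 + (X : Matrix (Fin dA × Fin dB) (Fin dA × Fin dB) ℂ))
          ⊗ₖ (1 : Matrix (Fin dB) (Fin dB) ℂ)) *
        (c • 1 + (X : Matrix (Fin dA × Fin dB) (Fin dA × Fin dB) ℂ))} with hS_def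
  show μ S = 0
  -- indices
  have h0A : (0 : ℕ) < dA := by omega
  have h1A : (1 : ℕ) < dA := by omega
  have h0B : (0 : ℕ) < dB := by omega
  have h1B : (1 : ℕ) < dB := by omega
  set a₀ : Fin dA := ⟨0, h0A⟩
  set a₁ : Fin dA := ⟨1, h1A⟩
  set b₀ : Fin dB := ⟨0, h0B⟩
  set b₁ : Fin dB := ⟨1, h1B⟩
  have haa : a₀ ≠ a₁ := by simp [a₀, a₁, Fin.ext_iff]
  have hbb : b₀ ≠ b₁ := by simp [b₀, b₁, Fin.ext_iff]
  set W : Matrix (Fin dA × Fin dB) (Fin dA × Fin dB) ℂ := wit a₀ a₁ b₀ b₁ with hW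
  have hWmem : W ∈ tracelessHermitian dA dB := ⟨wit_herm a₀ a₁ b₀ b₁, wit_trace a₀ a₁ b₀ b₁⟩
  set W₀ : tracelessHermitian dA dB := ⟨W, hWmem⟩ with hW₀def
  have hc2 : com W W ((a₀, b₀)) ((a₁, b₀)) ≠ 0 := by
    rw [hW, com_wit_entry a₀ a₁ b₀ b₁ haa hbb]
    simp
    intro h
    omega
  have hW0 : W₀ ≠ 0 := by
    intro h
    apply hc2
    have : W = 0 := congrArg Subtype.val h
    simp [this, com]
  -- the set is closed, hence measurable
  have hcoe : Continuous fun X : tracelessHermitian dA dB => (X : Matrix (Fin dA × Fin dB) (Fin dA × Fin dB) ℂ) :=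
    continuous_subtype_val
  have hA : Continuous fun X : tracelessHermitian dA dB =>
      c • (1 : Matrix (Fin dA × Fin dB) (Fin dA × Fin dB) ℂ)
        + (X : Matrix (Fin dA × Fin dB) (Fin dA × Fin dB) ℂ) :=
    continuous_const.add hcoe
  have hpt : Continuous fun X : tracelessHermitian dA dB =>
      ptraceB (c • 1 + (X : Matrix (Fin dA × Fin dB) (Fin dA × Fin dB) ℂ)) := by
    apply continuous_matrix
    intro i j
    show Continuous fun X : tracelessHermitian dA dB =>
      ∑ b, (c • 1 + (X : Matrix (Fin dA × Fin dB) (Fin dA × Fin dB) ℂ)) (i, b) (j, b)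
    exact continuous_finset_sum _ fun b _ => hA.matrix_elem (i, b) (j, b)
  have hK : Continuous fun X : tracelessHermitian dA dB =>
      ptraceB (c • 1 + (X : Matrix (Fin dA × Fin dB) (Fin dA × Fin dB) ℂ))
        ⊗ₖ (1 : Matrix (Fin dB) (Fin dB) ℂ) :=
    continuous_matrix fun p q => (hpt.matrix_elem p.1 q.1).mul continuous_const
  have hScl : IsClosed S := isClosed_eq (hA.matrix_mul hK) (hK.matrix_mul hA)
  -- decompose V as (Fin m → ℝ) × ℝ with the last coordinate along W₀
  haveI : FiniteDimensional ℝ (tracelessHermitian dA dB) := inferInstance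
  set P : Submodule ℝ (tracelessHermitian dA dB) := ℝ ∙ W₀ with hP
  obtain ⟨U, hU⟩ := Submodule.exists_isCompl P
  haveI : Module.Free ℝ U := Module.Free.of_divisionRing ℝ U
  haveI hUfd : FiniteDimensional ℝ U := inferInstance
  set m : ℕ := Module.finrank ℝ U with hm
  set bU : Module.Basis (Fin m) ℝ U := Module.finBasis ℝ U with hbU
  set e : ((Fin m → ℝ) × ℝ) ≃ₗ[ℝ] (tracelessHermitian dA dB) :=
    (bU.equivFun.symm.prodCongr
        (LinearEquiv.toSpanNonzeroSingleton ℝ (tracelessHermitian dA dB) W₀ hW0)).trans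
      (Submodule.prodEquivOfIsCompl U P hU.symm) with he_def
  have he1 : e (0, 1) = W₀ := by
    simp [he_def, Submodule.coe_prodEquivOfIsCompl',
      LinearEquiv.toSpanNonzeroSingleton_one]
  have heC : Continuous e := LinearMap.continuous_of_finiteDimensional (e : ((Fin m → ℝ) × ℝ) →ₗ[ℝ] (tracelessHermitian dA dB))
  have heC' : Continuous e.symm :=
    LinearMap.continuous_of_finiteDimensional (e.symm : (tracelessHermitian dA dB) →ₗ[ℝ] ((Fin m → ℝ) × ℝ))
  set ν : Measure ((Fin m → ℝ) × ℝ) := μ.map e.symm with hν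
  haveI : ν.IsAddHaarMeasure := by
    rw [hν]
    exact Measure.MapLinearEquiv.isAddHaarMeasure μ e.symm
  set T : Set ((Fin m → ℝ) × ℝ) := ⇑e ⁻¹' S with hT_def
  have hT : MeasurableSet T := (hScl.preimage heC).measurableSet
  have hμS : μ S = ν T := by
    rw [hν, Measure.map_apply heC'.measurable hT]
    congr 1
    ext X
    simp [hT_def, Set.mem_preimage, e.apply_symm_apply]
  let base : Measure ((Fin m → ℝ) × ℝ) :=
    (volume : Measure (Fin m → ℝ)).prod (volume : Measure ℝ)
  have hbase_def : base = (volume : Measure (Fin m → ℝ)).prod (volume : Measure ℝ) := rfl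
  have huniq : ν = Measure.addHaarScalarFactor ν base • base :=
    Measure.isAddLeftInvariant_eq_smul ν base
  have hbase : base T = 0 := by
    rw [hbase_def, Measure.measure_prod_null hT]
    refine Filter.Eventually.of_forall fun x => ?_
    show (volume : Measure ℝ) (Prod.mk x ⁻¹' T) = 0
    have hslice : Prod.mk x ⁻¹' T = {t : ℝ | e (x, t) ∈ S} := rfl
    rw [hslice]
    have hline : ∀ t : ℝ, e (x, t) = e (x, 0) + t • W₀ := by
      intro t
      have hxt : (x, t) = (x, (0 : ℝ)) + t • ((0 : Fin m → ℝ), (1 : ℝ)) := by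
        simp [Prod.ext_iff]
      rw [hxt, map_add, _root_.map_smul, he1]
    have hfin : {t : ℝ | e (x, t) ∈ S}.Finite := by
      have hAeq : ∀ t : ℝ, c • (1 : Matrix (Fin dA × Fin dB) (Fin dA × Fin dB) ℂ)
          + ((e (x, t) : tracelessHermitian dA dB) : Matrix (Fin dA × Fin dB) (Fin dA × Fin dB) ℂ)
          = (c • 1 + ((e (x, (0:ℝ)) : tracelessHermitian dA dB) : Matrix (Fin dA × Fin dB) (Fin dA × Fin dB) ℂ))
            + (t : ℂ) • W := by
        intro t
        rw [hline t]
        push_cast [Submodule.coe_add, Submodule.coe_smul]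
        rw [← smul_one_smul ℂ t (W : Matrix (Fin dA × Fin dB) (Fin dA × Fin dB) ℂ)]
        simp [Complex.real_smul]
        abel
      refine Set.Finite.subset (line_finite
        (c • 1 + ((e (x, (0:ℝ)) : tracelessHermitian dA dB) : Matrix (Fin dA × Fin dB) (Fin dA × Fin dB) ℂ)) W
        ((a₀, b₀)) ((a₁, b₀)) hc2) ?_
      intro t ht
      simp only [Set.mem_setOf_eq] at ht ⊢
      rw [← hAeq t]
      rw [hS_def, Set.mem_setOf_eq] at ht
      rw [com, sub_eq_zero]
      exact ht
    exact hfin.measure_zero _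
  rw [hμS, huniq, Measure.smul_apply, hbase, smul_zero]
end

section
/- Global depolarization preserves (non-)membership in Ω₀ before the infinite-time limit: for every density matrix ρ on ℂ^{dA} ⊗ ℂ^{dB} and every t ∈ [0,1), the state (1−t)·ρ + t·(I/d) belongs to Ω₀ if and only if ρ belongs to Ω₀. In particular, if ρ ∉ Ω₀ then the whole segment {(1−t)ρ + t·I/d : t ∈ [0,1)} consists of states outside Ω₀. -/
open Matrix MeasureTheory
open scoped Kronecker ComplexOrder

/-! ### Auxiliary lemmas -/

lemma psd_trace_nonneg {n : Type*} [Fintype n] [DecidableEq n] {A : Matrix n n ℂ}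
    (hA : A.PosSemidef) : 0 ≤ A.trace := by
  obtain ⟨B, rfl⟩ : ∃ B : Matrix n n ℂ, A = Bᴴ * B := by
    open scoped MatrixOrder in
    obtain ⟨B, hB⟩ := CStarAlgebra.nonneg_iff_eq_star_mul_self.mp hA.nonneg
    exact ⟨B, hB⟩
  rw [Matrix.trace]
  refine Finset.sum_nonneg fun i _ => ?_
  rw [Matrix.diag_apply, Matrix.mul_apply]
  exact Finset.sum_nonneg fun j _ => by
    simpa [Matrix.conjTranspose_apply] using star_mul_self_nonneg (B j i)

lemma psd_trace_zero {n : Type*} [Fintype n] [DecidableEq n] {A : Matrix n n ℂ}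
    (hA : A.PosSemidef) (h : A.trace = 0) : A = 0 := by
  obtain ⟨B, rfl⟩ : ∃ B : Matrix n n ℂ, A = Bᴴ * B := by
    open scoped MatrixOrder in
    obtain ⟨B, hB⟩ := CStarAlgebra.nonneg_iff_eq_star_mul_self.mp hA.nonneg
    exact ⟨B, hB⟩
  suffices hB : B = 0 by simp [hB]
  rw [Matrix.trace] at h
  have h1 : ∀ i ∈ Finset.univ, (Bᴴ * B).diag i = 0 := by
    refine (Finset.sum_eq_zero_iff_of_nonneg fun i _ => ?_).mp h
    rw [Matrix.diag_apply, Matrix.mul_apply]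
    exact Finset.sum_nonneg fun j _ => by
      simpa [Matrix.conjTranspose_apply] using star_mul_self_nonneg (B j i)
  ext j i
  have h2 := h1 i (Finset.mem_univ i)
  rw [Matrix.diag_apply, Matrix.mul_apply] at h2
  have h3 : ∀ k ∈ Finset.univ, (Bᴴ) i k * B k i = 0 := by
    refine (Finset.sum_eq_zero_iff_of_nonneg fun k _ => ?_).mp h2
    simpa [Matrix.conjTranspose_apply] using star_mul_self_nonneg (B k i)
  have h4 := h3 j (Finset.mem_univ j)
  rw [Matrix.conjTranspose_apply] at h4
  rcases mul_eq_zero.mp h4 with h5 | h5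
  · simpa using star_eq_zero.mp h5
  · simpa using h5

lemma psd_smul {n : Type*} [Fintype n] {A : Matrix n n ℂ} (hA : A.PosSemidef)
    {r : ℝ} (hr : 0 ≤ r) : (((r : ℂ)) • A).PosSemidef := by
  constructor
  · have h1 := hA.1
    unfold Matrix.IsHermitian at h1 ⊢
    rw [Matrix.conjTranspose_smul, h1]
    congr 1
    simp [Complex.ext_iff]
  · intro x
    have := hA.2 x
    exact (hA.smul (Complex.zero_le_real.mpr hr)).2 x

lemma sum_kronecker_left {l m n p : Type*} [Fintype l] {ι : Type*} (s : Finset ι)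
    (f : ι → Matrix l m ℂ) (X : Matrix n p ℂ) :
    (∑ j ∈ s, f j) ⊗ₖ X = ∑ j ∈ s, (f j ⊗ₖ X) := by
  ext ⟨i, j⟩ ⟨k, r⟩
  simp [Matrix.kroneckerMap_apply, Matrix.sum_apply, Finset.sum_mul]

lemma kron_sub_right {l m n p : Type*} (A : Matrix l m ℂ) (X Y : Matrix n p ℂ) :
    A ⊗ₖ (X - Y) = A ⊗ₖ X - A ⊗ₖ Y := by
  ext ⟨i, j⟩ ⟨k, r⟩
  simp [Matrix.kroneckerMap_apply, mul_sub]

lemma sum_proj_eq_one {dA : ℕ} (v : Fin dA → Fin dA → ℂ)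
    (hv : ∀ j k, star (v j) ⬝ᵥ v k = if j = k then 1 else 0) :
    ∑ j, Matrix.vecMulVec (v j) (star (v j)) = 1 := by
  let U : Matrix (Fin dA) (Fin dA) ℂ := Matrix.of fun i j => v j i
  have h1 : Uᴴ * U = 1 := by
    ext j k
    have := hv j k
    simpa [U, Matrix.mul_apply, Matrix.conjTranspose_apply, Matrix.one_apply,
      dotProduct] using this
  have h2 : U * Uᴴ = 1 := mul_eq_one_comm.mp h1
  calc ∑ j, Matrix.vecMulVec (v j) (star (v j)) = U * Uᴴ := by
        ext i i'
        simp [U, Matrix.mul_apply, Matrix.sum_apply, Matrix.vecMulVec_apply,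
          Matrix.conjTranspose_apply, Pi.star_apply]
    _ = 1 := h2

/-- The compression (isometry) matrix `|v_j⟩⟨e| ⊗ 1`. -/
def compM {dA dB : ℕ} (v : Fin dA → Fin dA → ℂ) (j : Fin dA) :
    Matrix (Fin dA × Fin dB) (Fin dB) ℂ :=
  Matrix.of fun p b' => v j p.1 * (if p.2 = b' then 1 else 0)

lemma comp_kron {dA dB : ℕ} (v : Fin dA → Fin dA → ℂ) (j k : Fin dA)
    (X : Matrix (Fin dB) (Fin dB) ℂ) :
    (compM (dB := dB) v j)ᴴ * ((Matrix.vecMulVec (v k) (star (v k))) ⊗ₖ X) * (compM (dB := dB) v j)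
      = ((star (v j) ⬝ᵥ v k) * (star (v k) ⬝ᵥ v j)) • X := by
  ext b b'
  simp only [Matrix.mul_apply, compM, Matrix.conjTranspose_apply, Matrix.of_apply,
    Matrix.kroneckerMap_apply, Matrix.vecMulVec_apply, Fintype.sum_prod_type,
    Pi.star_apply, apply_ite, star_zero, mul_ite, ite_mul,
    mul_zero, zero_mul, mul_one, Finset.sum_ite_eq, Finset.sum_ite_eq',
    Finset.mem_univ, if_true, Matrix.smul_apply, smul_eq_mul, dotProduct]
  simp only [Finset.sum_mul, Finset.mul_sum]
  refine Finset.sum_congr rfl fun a _ => Finset.sum_congr rfl fun a' _ => ?_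
  ring

/-- A state that is a sum of blocks `P_j ⊗ D_j` with `D_j` PSD of real trace
summing to 1 has zero discord. -/
lemma zeroDiscord_of_blocks {dA dB : ℕ} (hdB : 0 < dB)
    (ρ : Matrix (Fin dA × Fin dB) (Fin dA × Fin dB) ℂ)
    (v : Fin dA → Fin dA → ℂ)
    (hv : ∀ j k, star (v j) ⬝ᵥ v k = if j = k then 1 else 0)
    (D : Fin dA → Matrix (Fin dB) (Fin dB) ℂ)
    (hD : ∀ j, (D j).PosSemidef)
    (q : Fin dA → ℝ)
    (hq : ∀ j, (D j).trace = (q j : ℂ))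
    (hqs : ∑ j, q j = 1)
    (hρ : ρ = ∑ j, (Matrix.vecMulVec (v j) (star (v j)) ⊗ₖ D j)) :
    IsZeroDiscord ρ := by
  have hdB' : ((dB : ℂ)) ≠ 0 := Nat.cast_ne_zero.mpr hdB.ne'
  have hqnn : ∀ j, 0 ≤ q j := fun j => by
    have h0 := psd_trace_nonneg (hD j)
    rw [hq j] at h0
    exact_mod_cast h0
  refine ⟨v, q, fun j => if q j = 0 then (dB : ℂ)⁻¹ • 1 else ((q j : ℂ))⁻¹ • D j,
    hv, hqnn, hqs, ?_, ?_⟩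
  · intro j
    by_cases h : q j = 0
    · simp only [if_pos h]
      refine ⟨?_, ?_⟩
      · rw [show ((dB:ℂ))⁻¹ = (((dB:ℝ)⁻¹ : ℝ) : ℂ) by push_cast; ring]
        exact psd_smul Matrix.PosSemidef.one (by positivity)
      · rw [Matrix.trace_smul, Matrix.trace_one]
        simp [hdB']
    · simp only [if_neg h]
      have hq' : ((q j : ℂ)) ≠ 0 := by exact_mod_cast h
      refine ⟨?_, ?_⟩
      · rw [show ((q j:ℂ))⁻¹ = (((q j)⁻¹ : ℝ) : ℂ) by push_cast; ring]
        exact psd_smul (hD j) (inv_nonneg.mpr (hqnn j))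
      · rw [Matrix.trace_smul, hq j, smul_eq_mul, inv_mul_cancel₀ hq']
  · rw [hρ]
    refine Finset.sum_congr rfl fun j _ => ?_
    by_cases h : q j = 0
    · have hD0 : D j = 0 := psd_trace_zero (hD j) (by rw [hq j, h]; simp)
      simp [if_pos h, h, hD0]
    · have hq' : ((q j : ℂ)) ≠ 0 := by exact_mod_cast h
      simp only [if_neg h]
      rw [Matrix.kronecker_smul, smul_smul, mul_inv_cancel₀ hq', one_smul]

/-- Global depolarization preserves (non-)membership in `Ω₀`
before the infinite-time limit: for a density matrix `ρ` and `t ∈ [0,1)`, the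
depolarized state `(1-t)·ρ + t·I/d` has zero discord iff `ρ` does. In
particular, if `ρ ∉ Ω₀`, the whole open segment towards `I/d` stays outside
`Ω₀`. -/
theorem depolarization_zeroDiscord_iff (dA dB : ℕ) (hdA : 0 < dA) (hdB : 0 < dB)
    (ρ : Matrix (Fin dA × Fin dB) (Fin dA × Fin dB) ℂ) (hρ : IsDensityMatrix ρ)
    (t : ℝ) (ht : t ∈ Set.Ico (0 : ℝ) 1) :
    IsZeroDiscord (((1 - t : ℝ) : ℂ) • ρ +
        (t : ℂ) • ((((dA * dB : ℕ) : ℂ))⁻¹ •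
          (1 : Matrix (Fin dA × Fin dB) (Fin dA × Fin dB) ℂ))) ↔
      IsZeroDiscord ρ := by
  obtain ⟨ht0, ht1⟩ := ht
  have hdA' : ((dA : ℝ)) ≠ 0 := Nat.cast_ne_zero.mpr hdA.ne'
  have hdB' : ((dB : ℝ)) ≠ 0 := Nat.cast_ne_zero.mpr hdB.ne'
  have h1t : (0:ℝ) < 1 - t := by linarith
  have h1t' : ((1 - t : ℝ) : ℂ) ≠ 0 := by
    exact_mod_cast Complex.ofReal_ne_zero.mpr h1t.ne'
  -- the key scalar : t / (dA * dB)
  have hdAc : ((dA : ℂ)) ≠ 0 := Nat.cast_ne_zero.mpr hdA.ne'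
  have hdBc : ((dB : ℂ)) ≠ 0 := Nat.cast_ne_zero.mpr hdB.ne'
  have h1tc : (1 : ℂ) - (t : ℂ) ≠ 0 := by
    rw [show (1:ℂ) - (t:ℂ) = ((1 - t : ℝ) : ℂ) by push_cast; ring]
    exact h1t'
  have hsc : (t : ℂ) * (((dA * dB : ℕ) : ℂ))⁻¹ = ((t / (dA * dB) : ℝ) : ℂ) := by
    push_cast
    ring
  constructor
  · rintro ⟨v, p, σ, hv, hp0, hp1, hσ, heq⟩
    set c : ℂ := ((t / (dA * dB) : ℝ) : ℂ) with hc
    set B : Fin dA → Matrix (Fin dB) (Fin dB) ℂ :=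
      fun j => ((1 - t : ℝ) : ℂ)⁻¹ • ((p j : ℂ) • σ j - c • 1) with hB
    have hone : (1 : Matrix (Fin dA × Fin dB) (Fin dA × Fin dB) ℂ)
        = ∑ j, (Matrix.vecMulVec (v j) (star (v j)) ⊗ₖ (1 : Matrix (Fin dB) (Fin dB) ℂ)) := by
      rw [← sum_kronecker_left, sum_proj_eq_one v hv, Matrix.one_kronecker_one]
    have key : ((1 - t : ℝ) : ℂ) • ρ
        = ∑ j, (Matrix.vecMulVec (v j) (star (v j)) ⊗ₖ ((p j : ℂ) • σ j - c • 1)) := by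
      have h2 : ((1 - t : ℝ) : ℂ) • ρ
          = (∑ j, (p j : ℂ) • (Matrix.vecMulVec (v j) (star (v j)) ⊗ₖ σ j))
            - (t : ℂ) • ((((dA * dB : ℕ) : ℂ))⁻¹ •
              (1 : Matrix (Fin dA × Fin dB) (Fin dA × Fin dB) ℂ)) := by
        rw [← heq]; abel
      rw [h2, smul_smul, hsc, hone, Finset.smul_sum, ← Finset.sum_sub_distrib]
      refine Finset.sum_congr rfl fun j _ => ?_
      rw [kron_sub_right, Matrix.kronecker_smul, Matrix.kronecker_smul]
    have hρB : ρ = ∑ j, (Matrix.vecMulVec (v j) (star (v j)) ⊗ₖ B j) := by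
      calc ρ = ((1 - t : ℝ) : ℂ)⁻¹ • (((1 - t : ℝ) : ℂ) • ρ) := by
              rw [smul_smul, inv_mul_cancel₀ h1t', one_smul]
        _ = _ := by
              rw [key, Finset.smul_sum]
              refine Finset.sum_congr rfl fun j _ => ?_
              simp only [hB]
              rw [← Matrix.kronecker_smul]
    have hcomp : ∀ j, (compM (dB := dB) v j)ᴴ * ρ * (compM (dB := dB) v j) = B j := by
      intro j
      rw [hρB, Matrix.mul_sum, Matrix.sum_mul]
      have h3 : ∀ k, (compM (dB := dB) v j)ᴴ * (Matrix.vecMulVec (v k) (star (v k)) ⊗ₖ B k)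
          * (compM (dB := dB) v j) = if j = k then B k else 0 := by
        intro k
        rw [comp_kron, hv j k, hv k j]
        by_cases h : j = k
        · simp [h]
        · simp [h, fun hh : k = j => h hh.symm]
      simp only [h3]
      simp
    have hBpsd : ∀ j, (B j).PosSemidef := by
      intro j
      rw [← hcomp j]
      exact hρ.1.conjTranspose_mul_mul_same (compM (dB := dB) v j)
    refine zeroDiscord_of_blocks hdB ρ v hv B hBpsd
      (fun j => (p j - t / dA) / (1 - t)) (fun j => ?_) ?_ hρB
    · simp only [hB, Matrix.trace_smul, Matrix.trace_sub, Matrix.trace_smul, (hσ j).2,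
        Matrix.trace_one, Fintype.card_fin, smul_eq_mul, mul_one, hc]
      push_cast
      field_simp
    · have hsum : ∑ j : Fin dA, (p j - t / dA) = 1 - t := by
        rw [Finset.sum_sub_distrib, hp1, Finset.sum_const, Finset.card_univ,
          Fintype.card_fin, nsmul_eq_mul]
        field_simp
      rw [← Finset.sum_div, hsum, div_self h1t.ne']
  · rintro ⟨v, p, σ, hv, hp0, hp1, hσ, heq⟩
    set c : ℂ := ((t / (dA * dB) : ℝ) : ℂ) with hc
    set D : Fin dA → Matrix (Fin dB) (Fin dB) ℂ :=
      fun j => (((1 - t) * p j : ℝ) : ℂ) • σ j + c • 1 with hD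
    have hone : (1 : Matrix (Fin dA × Fin dB) (Fin dA × Fin dB) ℂ)
        = ∑ j, (Matrix.vecMulVec (v j) (star (v j)) ⊗ₖ (1 : Matrix (Fin dB) (Fin dB) ℂ)) := by
      rw [← sum_kronecker_left, sum_proj_eq_one v hv, Matrix.one_kronecker_one]
    have hdep : ((1 - t : ℝ) : ℂ) • ρ +
        (t : ℂ) • ((((dA * dB : ℕ) : ℂ))⁻¹ •
          (1 : Matrix (Fin dA × Fin dB) (Fin dA × Fin dB) ℂ))
        = ∑ j, (Matrix.vecMulVec (v j) (star (v j)) ⊗ₖ D j) := by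
      rw [heq, smul_smul, hsc, hone, Finset.smul_sum, Finset.smul_sum,
        ← Finset.sum_add_distrib]
      refine Finset.sum_congr rfl fun j _ => ?_
      simp only [hD]
      rw [Matrix.kronecker_add, Matrix.kronecker_smul, Matrix.kronecker_smul,
        smul_smul]
      congr 2
      push_cast
      ring
    have hDpsd : ∀ j, (D j).PosSemidef := by
      intro j
      refine Matrix.PosSemidef.add ?_ ?_
      · exact psd_smul (hσ j).1 (mul_nonneg h1t.le (hp0 j))
      · rw [hc]
        exact psd_smul Matrix.PosSemidef.one (by positivity)
    refine zeroDiscord_of_blocks hdB _ v hv D hDpsd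
      (fun j => (1 - t) * p j + t / dA) (fun j => ?_) ?_ hdep
    · simp only [hD, Matrix.trace_add, Matrix.trace_smul, (hσ j).2, Matrix.trace_one, Fintype.card_fin,
        smul_eq_mul, mul_one, hc]
      push_cast
      field_simp
    · rw [Finset.sum_add_distrib, ← Finset.mul_sum, hp1, Finset.sum_const,
        Finset.card_univ, Fintype.card_fin, nsmul_eq_mul, mul_one]
      field_simp
      ring
end

section
/- Let Φ be a ℂ-linear endomorphism of the space of d×d complex matrices (indexed by Fin dA × Fin dB) that is diagonalizable (there is a basis of the matrix space consisting of eigenvectors of Φ) and all of whose eigenvalues are nonzero. If a density matrix ρ satisfies [ρ, (Tr_B ρ) ⊗ I_{dB}] ≠ 0, then for every natural number N there exists n > N such that [Φ^n(ρ), (Tr_B Φ^n(ρ)) ⊗ I_{dB}] ≠ 0. In other words, the trajectory (Φ^n(ρ))_n leaves the set C₀ at arbitrarily large times: discord cannot vanish suddenly and permanently at any finite time. -/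
open Matrix MeasureTheory
open scoped Kronecker ComplexOrder

namespace TrajAux

/-- The linear map `Y ↦ (Tr_B Y) ⊗ I`. -/
noncomputable def G (dA dB : ℕ) :
    Matrix (Fin dA × Fin dB) (Fin dA × Fin dB) ℂ →ₗ[ℂ]
      Matrix (Fin dA × Fin dB) (Fin dA × Fin dB) ℂ where
  toFun ρ := ptraceB ρ ⊗ₖ (1 : Matrix (Fin dB) (Fin dB) ℂ)
  map_add' x y := by
    have h : ptraceB (x + y) = ptraceB x + ptraceB y := by
      ext a a'; simp [ptraceB, Finset.sum_add_distrib]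
    show ptraceB (x + y) ⊗ₖ (1 : Matrix (Fin dB) (Fin dB) ℂ) = _
    rw [h, Matrix.add_kronecker]
  map_smul' c x := by
    have h : ptraceB (c • x) = c • ptraceB x := by
      ext a a'; simp [ptraceB, Finset.mul_sum]
    show ptraceB (c • x) ⊗ₖ (1 : Matrix (Fin dB) (Fin dB) ℂ) = _
    rw [h, Matrix.smul_kronecker]
    rfl

/-- The bilinear "commutator" map `(X, Y) ↦ [X, (Tr_B Y) ⊗ I]`. -/
noncomputable def F (dA dB : ℕ) :
    Matrix (Fin dA × Fin dB) (Fin dA × Fin dB) ℂ →ₗ[ℂ]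
      Matrix (Fin dA × Fin dB) (Fin dA × Fin dB) ℂ →ₗ[ℂ]
        Matrix (Fin dA × Fin dB) (Fin dA × Fin dB) ℂ :=
  LinearMap.mk₂ ℂ (fun X Y => X * (G dA dB Y) - (G dA dB Y) * X)
    (fun X X' Y => by noncomm_ring)
    (fun c X Y => by simp [smul_mul_assoc, mul_smul_comm, smul_sub])
    (fun X Y Y' => by simp only [map_add]; noncomm_ring)
    (fun c X Y => by
      simp only [_root_.map_smul]
      simp [smul_mul_assoc, mul_smul_comm, smul_sub])

end TrajAux

/-- Let `Φ` be a diagonalizable linear endomorphism of the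
space of bipartite matrices all of whose eigenvalues are nonzero. If a density
matrix `ρ` has nonvanishing commutator with its reduced state, then the
trajectory `(Φ^n ρ)_n` leaves `C₀` at arbitrarily large times: discord cannot
vanish suddenly and permanently at any finite time. -/
theorem trajectory_leaves_C0 (dA dB : ℕ) (hdA : 0 < dA) (hdB : 0 < dB)
    (Φ : Module.End ℂ (Matrix (Fin dA × Fin dB) (Fin dA × Fin dB) ℂ))
    (hdiag : ∃ (ι : Type) (b : Module.Basis ι ℂ (Matrix (Fin dA × Fin dB) (Fin dA × Fin dB) ℂ))
      (ev : ι → ℂ), ∀ i, Φ (b i) = ev i • b i)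
    (hev : ∀ lam : ℂ, Module.End.HasEigenvalue Φ lam → lam ≠ 0)
    (ρ : Matrix (Fin dA × Fin dB) (Fin dA × Fin dB) ℂ) (hρ : IsDensityMatrix ρ)
    (hc : ρ * (ptraceB ρ ⊗ₖ (1 : Matrix (Fin dB) (Fin dB) ℂ)) ≠
      (ptraceB ρ ⊗ₖ (1 : Matrix (Fin dB) (Fin dB) ℂ)) * ρ) :
    ∀ N : ℕ, ∃ n : ℕ, N < n ∧
      (Φ ^ n) ρ * (ptraceB ((Φ ^ n) ρ) ⊗ₖ (1 : Matrix (Fin dB) (Fin dB) ℂ)) ≠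
        (ptraceB ((Φ ^ n) ρ) ⊗ₖ (1 : Matrix (Fin dB) (Fin dB) ℂ)) * (Φ ^ n) ρ := by
  classical
  intro N
  by_contra hcon
  push_neg at hcon
  obtain ⟨ι, b, ev, hΦ⟩ := hdiag
  haveI : Fintype ι := FiniteDimensional.fintypeBasisIndex b
  set F := TrajAux.F dA dB with hF
  -- reformulate hypothesis/goal via F
  have hFdef : ∀ (X Y : Matrix (Fin dA × Fin dB) (Fin dA × Fin dB) ℂ),
      F X Y = X * (ptraceB Y ⊗ₖ (1 : Matrix (Fin dB) (Fin dB) ℂ)) -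
        (ptraceB Y ⊗ₖ (1 : Matrix (Fin dB) (Fin dB) ℂ)) * X := fun X Y => rfl
  have hzero : ∀ n, N < n → F ((Φ ^ n) ρ) ((Φ ^ n) ρ) = 0 := by
    intro n hn
    rw [hFdef, sub_eq_zero]
    exact hcon n hn
  -- eigenvalues are nonzero
  have hev' : ∀ i, ev i ≠ 0 := by
    intro i
    refine hev (ev i) (Module.End.hasEigenvalue_of_hasEigenvector ⟨?_, b.ne_zero i⟩)
    rw [Module.End.mem_eigenspace_iff]
    exact hΦ i
  set c : ι → ℂ := fun i => b.repr ρ i with hcdef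
  have key : ∀ n : ℕ, (Φ ^ n) ρ = ∑ i, (c i * ev i ^ n) • b i := by
    intro n
    induction n with
    | zero =>
      simp only [pow_zero, mul_one, Module.End.one_apply]
      exact (b.sum_repr ρ).symm
    | succ n ih =>
      rw [pow_succ', Module.End.mul_apply, ih, map_sum]
      refine Finset.sum_congr rfl fun i _ => ?_
      rw [_root_.map_smul, hΦ i, smul_smul, pow_succ]
      ring_nf
  set μ : ι × ι → ℂ := fun p => ev p.1 * ev p.2 with hμdef
  set T : Finset ℂ := Finset.univ.image μ with hTdef
  have hTne : ∀ s ∈ T, s ≠ 0 := by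
    intro s hs
    rw [hTdef, Finset.mem_image] at hs
    obtain ⟨p, _, rfl⟩ := hs
    exact mul_ne_zero (hev' p.1) (hev' p.2)
  set W : ℂ → Matrix (Fin dA × Fin dB) (Fin dA × Fin dB) ℂ :=
    fun s => ∑ p ∈ Finset.univ.filter (fun p : ι × ι => μ p = s),
      (c p.1 * c p.2) • F (b p.1) (b p.2) with hWdef
  have gsum : ∀ n : ℕ, F ((Φ ^ n) ρ) ((Φ ^ n) ρ) = ∑ s ∈ T, s ^ n • W s := by
    intro n
    have expand : F ((Φ ^ n) ρ) ((Φ ^ n) ρ)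
        = ∑ p : ι × ι, (μ p ^ n) • ((c p.1 * c p.2) • F (b p.1) (b p.2)) := by
      rw [key n]
      simp only [map_sum, LinearMap.sum_apply, _root_.map_smul, LinearMap.smul_apply]
      rw [← Finset.univ_product_univ, Finset.sum_product]
      simp only [Finset.smul_sum]
      rw [Finset.sum_comm]
      refine Finset.sum_congr rfl fun i _ => Finset.sum_congr rfl fun j _ => ?_
      rw [smul_smul, smul_smul]
      have hsc : c j * ev j ^ n * (c i * ev i ^ n) = μ (i, j) ^ n * (c i * c j) := by
        simp only [hμdef, mul_pow]
        ring
      rw [hsc]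
    rw [expand, hWdef]
    rw [← Finset.sum_fiberwise_of_maps_to (g := μ) (t := T)
      (fun p _ => Finset.mem_image_of_mem μ (Finset.mem_univ p))]
    refine Finset.sum_congr rfl fun s _ => ?_
    rw [Finset.smul_sum]
    refine Finset.sum_congr rfl fun p hp => ?_
    rw [Finset.mem_filter] at hp
    rw [hp.2]
  -- per-entry coefficients vanish
  have hW0 : ∀ s ∈ T, W s = 0 := by
    intro s hs
    ext k l
    have li : LinearIndependent ℂ (fun s : ℂ => ⇑(powersHom ℂ s)) :=
      (linearIndependent_monoidHom (Multiplicative ℕ) ℂ).comp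
        (fun s => powersHom ℂ s) (powersHom ℂ).injective
    have happ := linearIndependent_iff'.mp li T
      (fun s => s ^ (N + 1) * W s k l) ?_ s hs
    · have hp : s ^ (N + 1) ≠ 0 := pow_ne_zero _ (hTne s hs)
      simp only [Matrix.zero_apply]
      exact (mul_eq_zero.mp happ).resolve_left hp
    · funext m
      have hm : ∀ j : ℕ, (∑ t ∈ T, t ^ (N + 1 + j) • W t) = 0 := by
        intro j
        rw [← gsum]
        exact hzero _ (by omega)
      have hm' := hm m.toAdd
      have : (∑ t ∈ T, t ^ (N + 1 + m.toAdd) • W t) k l = 0 := by rw [hm']; rfl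
      rw [Matrix.sum_apply] at this
      simp only [Finset.sum_apply, Pi.smul_apply, Pi.zero_apply, smul_eq_mul,
        powersHom_apply]
      calc (∑ t ∈ T, t ^ (N + 1) * W t k l * t ^ m.toAdd)
          = ∑ t ∈ T, t ^ (N + 1 + m.toAdd) * W t k l := by
            refine Finset.sum_congr rfl fun t _ => ?_
            rw [pow_add]; ring
        _ = 0 := by
            rw [← this]
            refine Finset.sum_congr rfl fun t _ => ?_
            rw [Matrix.smul_apply, smul_eq_mul]
  -- conclude: commutator at time 0 vanishes, contradiction
  have : F ρ ρ = 0 := by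
    have h0 := gsum 0
    simp only [pow_zero, one_pow, one_smul, Module.End.one_apply] at h0
    rw [h0]
    exact Finset.sum_eq_zero hW0
  rw [hFdef, sub_eq_zero] at this
  exact hc this
end

section
/- Let Φ be a ℂ-linear endomorphism of the space of d×d complex matrices (indexed by Fin dA × Fin dB) that is diagonalizable with all eigenvalues nonzero, let Λ ⊂ ℂ be its (finite) set of eigenvalues, and let m be the cardinality of the set {λ·μ : λ, μ ∈ Λ} of pairwise products of eigenvalues. If a density matrix ρ satisfies [ρ, (Tr_B ρ) ⊗ I_{dB}] ≠ 0, then for every natural number N there exists n with N < n ≤ N + m such that [Φ^n(ρ), (Tr_B Φ^n(ρ)) ⊗ I_{dB}] ≠ 0: among any m consecutive times, at least one evolved state lies outside C₀. -/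
open Matrix MeasureTheory
open scoped Kronecker ComplexOrder

/-- The linear map `X ↦ (Tr_B X) ⊗ I`. -/
noncomputable def Lmap (dA dB : ℕ) :
    Matrix (Fin dA × Fin dB) (Fin dA × Fin dB) ℂ →ₗ[ℂ]
      Matrix (Fin dA × Fin dB) (Fin dA × Fin dB) ℂ where
  toFun X := ptraceB X ⊗ₖ (1 : Matrix (Fin dB) (Fin dB) ℂ)
  map_add' X Y := by
    show ptraceB (X + Y) ⊗ₖ (1 : Matrix (Fin dB) (Fin dB) ℂ) = _
    have h : ptraceB (X + Y) = ptraceB X + ptraceB Y := by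
      ext a a'
      simp [ptraceB, Finset.sum_add_distrib]
    rw [h, Matrix.add_kronecker]
  map_smul' a X := by
    show ptraceB (a • X) ⊗ₖ (1 : Matrix (Fin dB) (Fin dB) ℂ) = _
    have h : ptraceB (a • X) = a • ptraceB X := by
      ext a' a''
      simp [ptraceB, Finset.mul_sum]
    rw [h]
    simp [Matrix.smul_kronecker]

/-- The bilinear map `(X, Y) ↦ X * L Y - L X * Y`. -/
noncomputable def Bmap (dA dB : ℕ) :
    Matrix (Fin dA × Fin dB) (Fin dA × Fin dB) ℂ →ₗ[ℂ]
      Matrix (Fin dA × Fin dB) (Fin dA × Fin dB) ℂ →ₗ[ℂ]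
        Matrix (Fin dA × Fin dB) (Fin dA × Fin dB) ℂ :=
  (LinearMap.mul ℂ _).compl₂ (Lmap dA dB) - (LinearMap.mul ℂ _).comp (Lmap dA dB)

lemma Bmap_apply (dA dB : ℕ) (X Y : Matrix (Fin dA × Fin dB) (Fin dA × Fin dB) ℂ) :
    Bmap dA dB X Y = X * (ptraceB Y ⊗ₖ (1 : Matrix (Fin dB) (Fin dB) ℂ))
      - (ptraceB X ⊗ₖ (1 : Matrix (Fin dB) (Fin dB) ℂ)) * Y := rfl

/-- If `M` is invertible and `∑ l, M k l • u l = 0` for all `k`, then `u = 0`. -/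
lemma vd_kernel {K : ℕ} {V : Type*} [AddCommGroup V] [Module ℂ V]
    (M : Matrix (Fin K) (Fin K) ℂ) (hM : IsUnit M.det)
    (u : Fin K → V) (h : ∀ k, ∑ l, M k l • u l = 0) : ∀ j, u j = 0 := by
  intro j
  have h1 : M⁻¹ * M = 1 := Matrix.nonsing_inv_mul M hM
  have : u j = ∑ l, ((M⁻¹ * M) j l) • u l := by
    rw [h1]
    simp [Matrix.one_apply, ite_smul]
  rw [this]
  have : ∑ l, ((M⁻¹ * M) j l) • u l = ∑ k, M⁻¹ j k • (∑ l, M k l • u l) := by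
    simp_rw [Matrix.mul_apply, Finset.sum_smul, Finset.smul_sum, smul_smul]
    rw [Finset.sum_comm]
  rw [this]
  simp [h]

/-- Let `Φ` be a diagonalizable linear endomorphism of the
space of bipartite matrices with all eigenvalues nonzero, and let `m` be the
number of distinct pairwise products of its eigenvalues. If a density matrix
`ρ` has nonvanishing commutator with its reduced state, then among any `m`
consecutive times at least one evolved state `Φ^n ρ` lies outside `C₀`. -/
theorem trajectory_leaves_C0_within_m_steps (dA dB : ℕ) (hdA : 0 < dA) (hdB : 0 < dB)
    (Φ : Module.End ℂ (Matrix (Fin dA × Fin dB) (Fin dA × Fin dB) ℂ))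
    (hdiag : ∃ (ι : Type) (b : Module.Basis ι ℂ (Matrix (Fin dA × Fin dB) (Fin dA × Fin dB) ℂ))
      (ev : ι → ℂ), ∀ i, Φ (b i) = ev i • b i)
    (hev : ∀ lam : ℂ, Module.End.HasEigenvalue Φ lam → lam ≠ 0)
    (m : ℕ)
    (hm : m = Set.ncard {x : ℂ | ∃ lam mu : ℂ,
      Module.End.HasEigenvalue Φ lam ∧ Module.End.HasEigenvalue Φ mu ∧ x = lam * mu})
    (ρ : Matrix (Fin dA × Fin dB) (Fin dA × Fin dB) ℂ) (hρ : IsDensityMatrix ρ)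
    (hc : ρ * (ptraceB ρ ⊗ₖ (1 : Matrix (Fin dB) (Fin dB) ℂ)) ≠
      (ptraceB ρ ⊗ₖ (1 : Matrix (Fin dB) (Fin dB) ℂ)) * ρ) :
    ∀ N : ℕ, ∃ n : ℕ, N < n ∧ n ≤ N + m ∧
      (Φ ^ n) ρ * (ptraceB ((Φ ^ n) ρ) ⊗ₖ (1 : Matrix (Fin dB) (Fin dB) ℂ)) ≠
        (ptraceB ((Φ ^ n) ρ) ⊗ₖ (1 : Matrix (Fin dB) (Fin dB) ℂ)) * (Φ ^ n) ρ := by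
  intro N
  by_contra hcon
  push_neg at hcon
  obtain ⟨ι, b, ev, hb⟩ := hdiag
  haveI : Fintype ι := FiniteDimensional.fintypeBasisIndex b
  -- each ev i is an eigenvalue
  have hEig : ∀ i, Module.End.HasEigenvalue Φ (ev i) := fun i =>
    Module.End.hasEigenvalue_of_hasEigenvector
      ⟨Module.End.mem_eigenspace_iff.mpr (hb i), b.ne_zero i⟩
  have hevne : ∀ i, ev i ≠ 0 := fun i => hev _ (hEig i)
  -- powers
  have hpow : ∀ (n : ℕ) (i : ι), (Φ ^ n) (b i) = ev i ^ n • b i := by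
    intro n i
    induction n with
    | zero => simp
    | succ n ih =>
      rw [pow_succ, Module.End.mul_apply, hb i, _root_.map_smul, ih, smul_smul, pow_succ,
        mul_comm]
  set c : ι → ℂ := fun i => b.repr ρ i with hcdef
  have hρsum : ρ = ∑ i, c i • b i := (b.sum_repr ρ).symm
  have hΦn : ∀ n : ℕ, (Φ ^ n) ρ = ∑ i, (c i * ev i ^ n) • b i := by
    intro n
    rw [hρsum, map_sum]
    refine Finset.sum_congr rfl fun i _ => ?_
    rw [_root_.map_smul, hpow, smul_smul]
  -- products of eigenvalues
  set P : ι × ι → ℂ := fun p => ev p.1 * ev p.2 with hPdef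
  set S : Finset ℂ := Finset.image P Finset.univ with hSdef
  -- the coefficients of the exponential sum
  set w : ℂ → Matrix (Fin dA × Fin dB) (Fin dA × Fin dB) ℂ := fun s =>
    ∑ p ∈ Finset.univ.filter (fun p : ι × ι => P p = s),
      (c p.1 * c p.2) • Bmap dA dB (b p.2) (b p.1) with hwdef
  -- the exponential-sum identity
  have hg : ∀ n : ℕ, Bmap dA dB ((Φ ^ n) ρ) ((Φ ^ n) ρ) = ∑ s ∈ S, s ^ n • w s := by
    intro n
    have expand : Bmap dA dB ((Φ ^ n) ρ) ((Φ ^ n) ρ)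
        = ∑ p : ι × ι, (c p.1 * c p.2 * P p ^ n) • Bmap dA dB (b p.2) (b p.1) := by
      simp only [hΦn, map_sum, LinearMap.map_smul, _root_.map_smul, LinearMap.sum_apply,
        LinearMap.smul_apply, Finset.smul_sum]
      rw [← Fintype.sum_prod_type']
      refine Finset.sum_congr rfl fun p _ => ?_
      rw [smul_smul]
      congr 1
      simp only [hPdef, mul_pow]
      ring
    rw [expand, ← Finset.sum_fiberwise_of_maps_to (g := P) (t := S)
      (fun p _ => Finset.mem_image_of_mem P (Finset.mem_univ p))]
    refine Finset.sum_congr rfl fun s hs => ?_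
    rw [hwdef, Finset.smul_sum]
    refine Finset.sum_congr rfl fun p hp => ?_
    have : P p = s := (Finset.mem_filter.mp hp).2
    rw [smul_smul, ← this]
    ring_nf
  -- each element of S is nonzero
  have hSne : ∀ s ∈ S, s ≠ 0 := by
    intro s hs
    obtain ⟨p, _, rfl⟩ := Finset.mem_image.mp hs
    exact mul_ne_zero (hevne p.1) (hevne p.2)
  -- S.card ≤ m
  have hcard : S.card ≤ m := by
    have hsub : (S : Set ℂ) ⊆ {x : ℂ | ∃ lam mu : ℂ,
        Module.End.HasEigenvalue Φ lam ∧ Module.End.HasEigenvalue Φ mu ∧ x = lam * mu} := by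
      intro s hs
      obtain ⟨p, _, rfl⟩ := Finset.mem_image.mp hs
      exact ⟨ev p.1, ev p.2, hEig p.1, hEig p.2, rfl⟩
    -- the eigenvalue set is contained in the range of ev
    have heigsub : ∀ lam : ℂ, Module.End.HasEigenvalue Φ lam → ∃ i, ev i = lam := by
      intro lam hlam
      obtain ⟨x, hx, hxne⟩ := hlam.exists_hasEigenvector
      have hx' : Φ x = lam • x := Module.End.mem_eigenspace_iff.mp hx
      by_contra hno
      push_neg at hno
      have hrep : x = ∑ i, b.repr x i • b i := (b.sum_repr x).symm
      have hΦx : Φ x = ∑ i, (ev i * b.repr x i) • b i := by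
        conv_lhs => rw [hrep]
        rw [map_sum]
        refine Finset.sum_congr rfl fun i _ => ?_
        rw [_root_.map_smul, hb i, smul_smul, mul_comm]
      have hlx : lam • x = ∑ i, (lam * b.repr x i) • b i := by
        conv_lhs => rw [hrep]
        rw [Finset.smul_sum]
        exact Finset.sum_congr rfl fun i _ => (smul_smul _ _ _)
      have hzero : ∑ i, ((ev i - lam) * b.repr x i) • b i = 0 := by
        have h1 : Φ x - lam • x = 0 := by rw [hx']; simp
        rw [hΦx, hlx, ← Finset.sum_sub_distrib] at h1
        rw [← h1]
        refine Finset.sum_congr rfl fun i _ => ?_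
        rw [← sub_smul]
        ring_nf
      have hall := Fintype.linearIndependent_iff.mp b.linearIndependent _ hzero
      have : ∀ i, b.repr x i = 0 := by
        intro i
        have := hall i
        rcases mul_eq_zero.mp this with h | h
        · exact absurd (by linear_combination h) (hno i)
        · exact h
      exact hxne (by rw [hrep]; simp [this])
    have hfin : {x : ℂ | ∃ lam mu : ℂ,
        Module.End.HasEigenvalue Φ lam ∧ Module.End.HasEigenvalue Φ mu ∧ x = lam * mu}.Finite := by
      apply Set.Finite.subset (Set.finite_range P)
      rintro x ⟨lam, mu, hl, hmu, rfl⟩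
      obtain ⟨i, hi⟩ := heigsub lam hl
      obtain ⟨j, hj⟩ := heigsub mu hmu
      exact ⟨(i, j), by simp [hPdef, hi, hj]⟩
    calc S.card = (S : Set ℂ).ncard := (Set.ncard_coe_finset S).symm
      _ ≤ _ := Set.ncard_le_ncard hsub hfin
      _ = m := hm.symm
  -- enumerate S
  set K := S.card with hK
  set e : S ≃ Fin K := S.equivFin with he
  set v : Fin K → ℂ := fun k => ((e.symm k : S) : ℂ) with hvdef
  have hvinj : Function.Injective v := by
    intro k l hkl
    exact e.symm.injective (Subtype.ext hkl)
  have hvne : ∀ k, v k ≠ 0 := fun k => hSne _ (e.symm k).2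
  -- the Vandermonde-type matrix
  set M : Matrix (Fin K) (Fin K) ℂ := Matrix.of fun k l => v l ^ (N + 1 + (k : ℕ))
    with hMdef
  have hMfact : M = (Matrix.vandermonde v)ᵀ * Matrix.diagonal (fun l => v l ^ (N + 1)) := by
    ext k l
    rw [Matrix.mul_diagonal]
    simp only [hMdef, Matrix.of_apply, Matrix.transpose_apply, Matrix.vandermonde_apply]
    rw [pow_add, mul_comm]
  have hMunit : IsUnit M.det := by
    rw [hMfact, Matrix.det_mul, Matrix.det_transpose, Matrix.det_diagonal]
    apply IsUnit.mul
    · exact (Matrix.det_vandermonde_ne_zero_iff.mpr hvinj).isUnit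
    · exact (Finset.prod_ne_zero_iff.mpr fun l _ => pow_ne_zero _ (hvne l)).isUnit
  -- the kernel condition
  have hker : ∀ k : Fin K, ∑ l, M k l • w (v l) = 0 := by
    intro k
    have hn1 : N < N + 1 + (k : ℕ) := by omega
    have hn2 : N + 1 + (k : ℕ) ≤ N + m := by
      have := k.2
      omega
    have hzero := hcon (N + 1 + (k : ℕ)) hn1 hn2
    have : Bmap dA dB ((Φ ^ (N + 1 + (k : ℕ))) ρ) ((Φ ^ (N + 1 + (k : ℕ))) ρ) = 0 := by
      rw [Bmap_apply, sub_eq_zero, hzero]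
    rw [hg] at this
    rw [← this]
    rw [← Finset.sum_coe_sort S (fun s => s ^ (N + 1 + (k : ℕ)) • w s)]
    rw [← e.symm.sum_comp (fun x : S => ((x : ℂ)) ^ (N + 1 + (k : ℕ)) • w (x : ℂ))]
    rfl
  have hwzero : ∀ s ∈ S, w s = 0 := by
    intro s hs
    have := vd_kernel M hMunit (fun l => w (v l)) hker (e ⟨s, hs⟩)
    simpa [hvdef] using this
  -- conclude
  have hfinal : Bmap dA dB ρ ρ = 0 := by
    have := hg 0
    simp only [pow_zero, one_smul, Module.End.one_apply] at this
    rw [this]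
    exact Finset.sum_eq_zero hwzero
  rw [Bmap_apply, sub_eq_zero] at hfinal
  exact hc hfinal
end

section
/- Let dA = dB = 2 and let ρ be the two-qubit maximally entangled Bell state, i.e. the 4×4 matrix indexed by Fin 2 × Fin 2 with entries ρ_{(i,i'),(j,j')} = (1/2)·δ_{i,i'}·δ_{j,j'} (the projector onto (|00⟩+|11⟩)/√2). Then ρ satisfies [ρ, (Tr_B ρ) ⊗ I₂] = 0 (so ρ ∈ C₀), but ρ is not a zero-discord state: there exist no orthonormal basis (v_j) of ℂ², nonnegative reals p_j summing to 1, and 2×2 density matrices σ_j with ρ = Σ_j p_j (v_j v_j*) ⊗ σ_j. Hence the inclusion Ω₀ ⊆ C₀ is strict. -/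
open Matrix MeasureTheory
open scoped Kronecker ComplexOrder

/-- The two-qubit Bell state `(|00⟩ + |11⟩)/√2` as a density matrix:
`ρ_{(i,i'),(j,j')} = (1/2)·δ_{i,i'}·δ_{j,j'}`. -/
noncomputable def bellState : Matrix (Fin 2 × Fin 2) (Fin 2 × Fin 2) ℂ :=
  Matrix.of fun p q => if p.1 = p.2 ∧ q.1 = q.2 then (1 / 2 : ℂ) else 0

/-- A psd 2×2 matrix with zero diagonal has zero off-diagonal entry. -/
lemma offdiag_zero_of_diag_zero {M : Matrix (Fin 2) (Fin 2) ℂ} (hM : M.PosSemidef)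
    (h00 : M 0 0 = 0) (h11 : M 1 1 = 0) : M 0 1 = 0 := by
  have h10 : M 1 0 = star (M 0 1) := by
    have := hM.1
    rw [Matrix.IsHermitian] at this
    have := congrFun (congrFun this 1) 0
    simpa [Matrix.conjTranspose_apply] using this.symm
  have key := hM.dotProduct_mulVec_nonneg ![1, -star (M 0 1)]
  have : star (![1, -star (M 0 1)] : Fin 2 → ℂ) ⬝ᵥ M.mulVec ![1, -star (M 0 1)]
      = -(2 * (star (M 0 1) * M 0 1)) := by
    simp [dotProduct, Matrix.mulVec, Fin.sum_univ_two, h00, h11, h10]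
    ring
  rw [this] at key
  set z := M 0 1
  have h2 : (0:ℂ) ≤ star z * z := star_mul_self_nonneg _
  have hle : (2:ℂ) * (star z * z) ≤ 0 := neg_nonneg.mp key
  have hle' : star z * z ≤ 0 := by
    calc star z * z ≤ star z * z + star z * z := le_add_of_nonneg_left h2
    _ = 2 * (star z * z) := (two_mul _).symm
    _ ≤ 0 := hle
  rcases mul_eq_zero.mp (le_antisymm hle' h2) with h | h
  · exact star_eq_zero.mp h
  · exact h

lemma bellState_posSemidef : bellState.PosSemidef := by
  refine Matrix.PosSemidef.of_dotProduct_mulVec_nonneg ?_ ?_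
  · ext ⟨a,b⟩ ⟨c,d⟩
    simp only [bellState, Matrix.conjTranspose_apply, Matrix.of_apply]
    split_ifs with h1 h2 h2 <;> simp_all [and_comm]
  · intro x
    have : star x ⬝ᵥ bellState.mulVec x
        = (1/2 : ℂ) * (star (x (0,0) + x (1,1)) * (x (0,0) + x (1,1))) := by
      simp [dotProduct, Matrix.mulVec, bellState, Fin.sum_univ_two,
        Fintype.sum_prod_type]
      ring
    rw [this]
    exact mul_nonneg (by rw [Complex.le_def]; norm_num) (star_mul_self_nonneg _)

lemma bellState_not_zeroDiscord : ¬ IsZeroDiscord bellState := by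
  rintro ⟨v, p, σ, hOrth, hp, hsum, hden, heq⟩
  have hE : ∀ (a b c d : Fin 2), (if a = b ∧ c = d then (1/2:ℂ) else 0)
      = ∑ j, (p j : ℂ) * (v j a * star (v j c) * σ j b d) := by
    intro a b c d
    have := congrFun (congrFun heq (a,b)) (c,d)
    simpa [bellState, Matrix.sum_apply, Matrix.kroneckerMap_apply,
      Matrix.vecMulVec_apply, mul_assoc] using this
  have hdiag : ∀ j (b : Fin 2), (0:ℂ) ≤ σ j b b := by
    intro j b
    have := (hden j).1.dotProduct_mulVec_nonneg (Pi.single b 1)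
    simpa [dotProduct, Matrix.mulVec, Pi.single_apply, Fin.sum_univ_two] using this
  have hterm_nonneg : ∀ (a b : Fin 2) j,
      (0:ℂ) ≤ (p j : ℂ) * (v j a * star (v j a) * σ j b b) := by
    intro a b j
    apply mul_nonneg
    · exact_mod_cast Complex.zero_le_real.mpr (hp j)
    · exact mul_nonneg (mul_star_self_nonneg _) (hdiag j b)
  have E1 : ∑ j, (p j : ℂ) * (v j 0 * star (v j 0) * σ j 1 1) = 0 := by
    have := hE 0 1 0 1; simpa using this.symm
  have E2 : ∑ j, (p j : ℂ) * (v j 1 * star (v j 1) * σ j 0 0) = 0 := by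
    have := hE 1 0 1 0; simpa using this.symm
  have E3 : ∑ j, (p j : ℂ) * (v j 0 * star (v j 1) * σ j 0 1) = 1/2 := by
    have := hE 0 0 1 1; simpa using this.symm
  obtain ⟨j, -, hj⟩ : ∃ j ∈ Finset.univ, (p j : ℂ) * (v j 0 * star (v j 1) * σ j 0 1) ≠ 0 := by
    by_contra h
    push_neg at h
    rw [Finset.sum_eq_zero h] at E3
    norm_num at E3
  have hpj : (p j : ℂ) ≠ 0 := fun h => hj (by rw [h]; ring)
  have hv0 : v j 0 ≠ 0 := fun h => hj (by rw [h]; ring)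
  have hv1 : star (v j 1) ≠ 0 := fun h => hj (by rw [h]; ring)
  have h11 : σ j 1 1 = 0 := by
    have := (Finset.sum_eq_zero_iff_of_nonneg (fun i _ => hterm_nonneg 0 1 i)).mp E1 j
      (Finset.mem_univ j)
    have hv0' : star (v j 0) ≠ 0 := star_ne_zero.mpr hv0
    rcases mul_eq_zero.mp this with h | h
    · exact absurd h hpj
    rcases mul_eq_zero.mp h with h' | h'
    · rcases mul_eq_zero.mp h' with h'' | h''
      · exact absurd h'' hv0
      · exact absurd h'' hv0'
    · exact h'
  have h00 : σ j 0 0 = 0 := by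
    have := (Finset.sum_eq_zero_iff_of_nonneg (fun i _ => hterm_nonneg 1 0 i)).mp E2 j
      (Finset.mem_univ j)
    have hv1' : v j 1 ≠ 0 := fun h => hv1 (by rw [h]; simp)
    rcases mul_eq_zero.mp this with h | h
    · exact absurd h hpj
    rcases mul_eq_zero.mp h with h' | h'
    · rcases mul_eq_zero.mp h' with h'' | h''
      · exact absurd h'' hv1'
      · exact absurd h'' hv1
    · exact h'
  have := offdiag_zero_of_diag_zero (hden j).1 h00 h11
  exact hj (by rw [this]; ring)

/-- The Bell state is a density matrix that commutes with
its reduced state tensored with the identity (so it belongs to `C₀`), yet it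
is not a zero-discord state. Hence the inclusion `Ω₀ ⊆ C₀` is strict. -/
theorem bellState_in_C0_not_zeroDiscord :
    IsDensityMatrix bellState ∧
    bellState * (ptraceB bellState ⊗ₖ (1 : Matrix (Fin 2) (Fin 2) ℂ)) =
      (ptraceB bellState ⊗ₖ (1 : Matrix (Fin 2) (Fin 2) ℂ)) * bellState ∧
    ¬ IsZeroDiscord bellState := by
  refine ⟨⟨bellState_posSemidef, ?_⟩, ?_, bellState_not_zeroDiscord⟩
  · simp [Matrix.trace, bellState, Fintype.sum_prod_type, Fin.sum_univ_two, Matrix.diag]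
  · have hpt : ptraceB bellState ⊗ₖ (1 : Matrix (Fin 2) (Fin 2) ℂ)
        = (1/2 : ℂ) • (1 : Matrix (Fin 2 × Fin 2) (Fin 2 × Fin 2) ℂ) := by
      ext ⟨a,b⟩ ⟨c,d⟩
      simp [ptraceB, bellState, Matrix.kroneckerMap_apply, Matrix.one_apply,
        Fin.sum_univ_two, Prod.ext_iff]
      fin_cases a <;> fin_cases c <;> simp
    rw [hpt, Matrix.mul_smul, Matrix.smul_mul, Matrix.mul_one, Matrix.one_mul]
end

section
/- Assume dA ≥ 2 and dB ≥ 2. Then the complement of C₀ is dense in the set of density matrices: for every density matrix ρ on ℂ^{dA} ⊗ ℂ^{dB} and every ε > 0 there exists a density matrix σ with ‖σ − ρ‖ < ε (any fixed norm on the matrix space) such that [σ, (Tr_B σ) ⊗ I_{dB}] ≠ 0. In particular, every zero-discord state is approximated arbitrarily well by states of strictly positive discord, so zero discord can never be certified by measurements of finite precision. -/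
open Matrix MeasureTheory
open scoped Kronecker ComplexOrder

attribute [local instance] Matrix.normedAddCommGroup
attribute [local instance] Matrix.normedSpace

/-- A real-nonnegative scalar multiple of a PSD matrix is PSD. -/
lemma psd_smul_aux {n : Type*} [Fintype n] (r : ℝ) (hr : 0 ≤ r) (M : Matrix n n ℂ)
    (h : M.PosSemidef) : ((r : ℂ) • M).PosSemidef := by
  rw [Matrix.posSemidef_iff_dotProduct_mulVec]
  constructor
  · unfold Matrix.IsHermitian
    rw [Matrix.conjTranspose_smul, h.1.eq]
    norm_num
  · intro x
    rw [Matrix.smul_mulVec, dotProduct_smul]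
    exact smul_nonneg (by exact_mod_cast hr) (h.dotProduct_mulVec_nonneg x)

/-- An outer product `u ⬝ uᴴ` is PSD. -/
lemma psd_vmv_aux {n : Type*} [Fintype n] (u : n → ℂ) :
    (Matrix.vecMulVec u (star u)).PosSemidef := by
  rw [Matrix.posSemidef_iff_dotProduct_mulVec]
  constructor
  · ext i j
    simp [Matrix.vecMulVec_apply, Matrix.conjTranspose_apply, mul_comm]
  · intro x
    have : star x ⬝ᵥ (Matrix.vecMulVec u (star u)) *ᵥ x
        = star (star u ⬝ᵥ x) * (star u ⬝ᵥ x) := by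
      simp only [dotProduct, Matrix.mulVec, Matrix.vecMulVec_apply, Pi.star_apply, star_sum,
        star_mul', star_star, Finset.mul_sum, Finset.sum_mul]
      rw [Finset.sum_comm]
      congr 1; ext i; congr 1; ext j; ring
    rw [this]
    exact star_mul_self_nonneg _

/-- Linearity of the partial trace. -/
lemma ptraceB_lin_aux {dA dB : ℕ} (x y : ℂ)
    (ρ τ : Matrix (Fin dA × Fin dB) (Fin dA × Fin dB) ℂ) :
    ptraceB (x • ρ + y • τ) = x • ptraceB ρ + y • ptraceB τ := by
  ext a a'
  simp [ptraceB, Finset.sum_add_distrib, Finset.mul_sum]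

/-- A sum over a fintype equals a two-point sum when the summand vanishes elsewhere. -/
lemma sum_pair_aux {α : Type*} [Fintype α] [DecidableEq α] (e0 e1 : α) (h : e0 ≠ e1)
    (f : α → ℂ) (hf : ∀ k, k ≠ e0 → k ≠ e1 → f k = 0) :
    ∑ k, f k = f e0 + f e1 := by
  rw [← Finset.sum_subset (Finset.subset_univ {e0, e1})]
  · rw [Finset.sum_pair h]
  · intro x _ hx
    simp only [Finset.mem_insert, Finset.mem_singleton, not_or] at hx
    exact hf x hx.1 hx.2

/-- The quadratic expansion of the commutator along a line of states. -/
lemma expand_aux {n : Type*} [Fintype n] (z : ℂ) (ρ τ Mρ Mτ : Matrix n n ℂ) :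
    ((1-z)•ρ + z•τ) * ((1-z)•Mρ + z•Mτ) - ((1-z)•Mρ + z•Mτ) * ((1-z)•ρ + z•τ)
    = (1-z)^2 • (ρ*Mρ - Mρ*ρ) + ((1-z)*z) • (ρ*Mτ - Mτ*ρ + τ*Mρ - Mρ*τ)
      + z^2 • (τ*Mτ - Mτ*τ) := by
  simp only [add_mul, mul_add, smul_mul_assoc, mul_smul_comm, smul_smul, smul_sub, smul_add,
    sub_sq]
  module

set_option maxHeartbeats 1600000 in
/-- For `dA, dB ≥ 2`, the complement of `C₀` is dense in the
set of density matrices: every density matrix is approximated arbitrarily well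
(in norm) by density matrices whose commutator with their reduced state is
nonzero, i.e. by states of strictly positive discord. -/
theorem complement_C0_dense (dA dB : ℕ) (hdA : 2 ≤ dA) (hdB : 2 ≤ dB)
    (ρ : Matrix (Fin dA × Fin dB) (Fin dA × Fin dB) ℂ) (hρ : IsDensityMatrix ρ)
    (ε : ℝ) (hε : 0 < ε) :
    ∃ σ : Matrix (Fin dA × Fin dB) (Fin dA × Fin dB) ℂ,
      IsDensityMatrix σ ∧ ‖σ - ρ‖ < ε ∧
      σ * (ptraceB σ ⊗ₖ (1 : Matrix (Fin dB) (Fin dB) ℂ)) ≠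
        (ptraceB σ ⊗ₖ (1 : Matrix (Fin dB) (Fin dB) ℂ)) * σ := by
  obtain ⟨hρpsd, hρtr⟩ := hρ
  -- local indices
  set a0 : Fin dA := ⟨0, by omega⟩ with ha0def
  set a1 : Fin dA := ⟨1, by omega⟩ with ha1def
  set b0 : Fin dB := ⟨0, by omega⟩ with hb0def
  set b1 : Fin dB := ⟨1, by omega⟩ with hb1def
  have ha : a0 ≠ a1 := by simp [ha0def, ha1def, Fin.ext_iff]
  have hb : b0 ≠ b1 := by simp [hb0def, hb1def, Fin.ext_iff]
  have he : ((a0, b0) : Fin dA × Fin dB) ≠ (a1, b1) := by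
    simp [Prod.ext_iff]; intro h; exact absurd h ha
  -- the reference highly-discordant state τ
  set u : Fin dA × Fin dB → ℂ :=
    fun p => if p = (a0, b0) then 2 else if p = (a1, b1) then 1 else 0 with hu
  set τ : Matrix (Fin dA × Fin dB) (Fin dA × Fin dB) ℂ :=
    (1/5 : ℂ) • Matrix.vecMulVec u (star u) with hτdef
  have hτapp : ∀ p q, τ p q = (1/5 : ℂ) * (u p * star (u q)) := by
    intro p q
    simp [hτdef, Matrix.vecMulVec_apply, mul_assoc]
  have hu00 : u (a0, b0) = 2 := by simp [hu]
  have hu11 : u (a1, b1) = 1 := by simp [hu, he.symm]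
  have huz : ∀ k, k ≠ (a0, b0) → k ≠ (a1, b1) → u k = 0 := by
    intro k h0 h1; simp [hu, h0, h1]
  -- τ is a density matrix
  have hτpsd : τ.PosSemidef := by
    rw [hτdef, show (1/5 : ℂ) = ((1/5 : ℝ) : ℂ) by norm_num]
    exact psd_smul_aux _ (by norm_num) _ (psd_vmv_aux u)
  have hτtr : τ.trace = 1 := by
    have : τ.trace = ∑ p, τ p p := rfl
    rw [this, sum_pair_aux (a0, b0) (a1, b1) he _
      (fun k h0 h1 => by simp [hτapp, huz k h0 h1])]
    simp [hτapp, hu00, hu11]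
    norm_num
  -- partial trace of τ
  have hptu0 : ∀ b, u (a0, b) = if b = b0 then 2 else 0 := by
    intro b
    by_cases hbb : b = b0 <;> simp [hu, hbb, Prod.ext_iff, ha]
  have hptu1 : ∀ b, u (a1, b) = if b = b1 then 1 else 0 := by
    intro b
    by_cases hbb : b = b1 <;> simp [hu, hbb, Prod.ext_iff, ha.symm]
  have hA00 : ptraceB τ a0 a0 = 4/5 := by
    show (∑ b, τ (a0, b) (a0, b)) = 4/5
    have : ∀ b, τ (a0, b) (a0, b) = if b = b0 then (4/5 : ℂ) else 0 := by
      intro b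
      rw [hτapp, hptu0 b]
      by_cases hbb : b = b0 <;> simp [hbb] <;> norm_num
    rw [Finset.sum_congr rfl (fun b _ => this b), Finset.sum_ite_eq']
    simp
  have hA11 : ptraceB τ a1 a1 = 1/5 := by
    show (∑ b, τ (a1, b) (a1, b)) = 1/5
    have : ∀ b, τ (a1, b) (a1, b) = if b = b1 then (1/5 : ℂ) else 0 := by
      intro b
      rw [hτapp, hptu1 b]
      by_cases hbb : b = b1 <;> simp [hbb] <;> norm_num
    rw [Finset.sum_congr rfl (fun b _ => this b), Finset.sum_ite_eq']
    simp
  -- the Kronecker lifts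
  set Mρ : Matrix (Fin dA × Fin dB) (Fin dA × Fin dB) ℂ :=
    ptraceB ρ ⊗ₖ (1 : Matrix (Fin dB) (Fin dB) ℂ) with hMρdef
  set Mτ : Matrix (Fin dA × Fin dB) (Fin dA × Fin dB) ℂ :=
    ptraceB τ ⊗ₖ (1 : Matrix (Fin dB) (Fin dB) ℂ) with hMτdef
  have hMτapp : ∀ p q : Fin dA × Fin dB,
      Mτ p q = ptraceB τ p.1 q.1 * (if p.2 = q.2 then 1 else 0) := by
    intro p q
    simp [hMτdef, Matrix.kroneckerMap_apply, Matrix.one_apply]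
  -- the key nonvanishing commutator entry of τ
  have hc : (τ * Mτ) (a0, b0) (a1, b1) - (Mτ * τ) (a0, b0) (a1, b1) = -6/25 := by
    rw [Matrix.mul_apply, Matrix.mul_apply]
    rw [sum_pair_aux (a0, b0) (a1, b1) he _
      (fun k h0 h1 => by simp [hτapp, huz k h0 h1])]
    rw [sum_pair_aux (a0, b0) (a1, b1) he _
      (fun k h0 h1 => by simp [hτapp, huz k h0 h1])]
    simp only [hMτapp, hτapp, hu00, hu11]
    simp [hb, hA00, hA11]
    norm_num
  -- choice of the step size
  set N : ℝ := ‖τ - ρ‖ with hN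
  have hN0 : 0 ≤ N := norm_nonneg _
  set δ : ℝ := min (ε / (N + 1)) 1 with hδdef
  have hδpos : 0 < δ := by
    apply lt_min
    · positivity
    · norm_num
  have hδ1 : δ ≤ 1 := min_le_right _ _
  have hδε : δ * N < ε := by
    have h1 : δ ≤ ε / (N + 1) := min_le_left _ _
    have : δ * N ≤ (ε / (N + 1)) * N := by
      apply mul_le_mul_of_nonneg_right h1 hN0
    calc δ * N ≤ (ε / (N + 1)) * N := this
      _ < ε := by
          rw [div_mul_eq_mul_div, div_lt_iff₀ (by positivity)]
          nlinarith
  -- the line of states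
  set σf : ℝ → Matrix (Fin dA × Fin dB) (Fin dA × Fin dB) ℂ :=
    fun t => (1 - (t : ℂ)) • ρ + (t : ℂ) • τ with hσf
  have hσdens : ∀ t : ℝ, 0 ≤ t → t ≤ 1 → IsDensityMatrix (σf t) := by
    intro t ht0 ht1
    constructor
    · apply Matrix.PosSemidef.add
      · rw [show (1 - (t : ℂ)) = ((1 - t : ℝ) : ℂ) by push_cast; ring]
        exact psd_smul_aux _ (by linarith) _ hρpsd
      · exact psd_smul_aux _ ht0 _ hτpsd
    · rw [hσf]
      simp only [Matrix.trace_add, Matrix.trace_smul, hρtr, hτtr, smul_eq_mul]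
      ring
  have hσnorm : ∀ t : ℝ, 0 ≤ t → t ≤ δ → ‖σf t - ρ‖ < ε := by
    intro t ht0 htδ
    have : σf t - ρ = (t : ℂ) • (τ - ρ) := by rw [hσf]; module
    rw [this, norm_smul]
    have : ‖(t : ℂ)‖ = t := by
      rw [Complex.norm_real, Real.norm_of_nonneg ht0]
    rw [this]
    calc t * ‖τ - ρ‖ ≤ δ * N := by
          apply mul_le_mul_of_nonneg_right htδ (norm_nonneg _)
      _ < ε := hδε
  -- main argument: by contradiction
  by_contra hcon
  push_neg at hcon
  -- each state on the line at small parameter has vanishing commutator entry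
  set A : ℂ := (ρ * Mρ) (a0, b0) (a1, b1) - (Mρ * ρ) (a0, b0) (a1, b1) with hA
  set B : ℂ := (ρ * Mτ) (a0, b0) (a1, b1) - (Mτ * ρ) (a0, b0) (a1, b1)
    + (τ * Mρ) (a0, b0) (a1, b1) - (Mρ * τ) (a0, b0) (a1, b1) with hB
  have hF : ∀ t : ℝ, 0 < t → t ≤ 1 → t ≤ δ →
      (1 - (t : ℂ))^2 * A + ((1 - (t : ℂ)) * (t : ℂ)) * B + (t : ℂ)^2 * (-6/25) = 0 := by
    intro t ht0 ht1 htδ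
    have hcomm := hcon (σf t) (hσdens t ht0.le ht1) (hσnorm t ht0.le htδ)
    have hMlin : ptraceB (σf t) ⊗ₖ (1 : Matrix (Fin dB) (Fin dB) ℂ)
        = (1 - (t : ℂ)) • Mρ + (t : ℂ) • Mτ := by
      rw [hσf]
      simp only
      rw [ptraceB_lin_aux]
      rw [hMρdef, hMτdef, Matrix.add_kronecker, Matrix.smul_kronecker,
        Matrix.smul_kronecker]
    rw [hMlin] at hcomm
    have h0 : ((1 - (t:ℂ)) • ρ + (t:ℂ) • τ) * ((1 - (t:ℂ)) • Mρ + (t:ℂ) • Mτ)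
        - ((1 - (t:ℂ)) • Mρ + (t:ℂ) • Mτ) * ((1 - (t:ℂ)) • ρ + (t:ℂ) • τ) = 0 := by
      rw [hσf] at hcomm
      simp only at hcomm
      rw [hcomm]; exact sub_self _
    rw [expand_aux] at h0
    have hentry : ((1 - (t:ℂ))^2 • (ρ*Mρ - Mρ*ρ)
        + ((1 - (t:ℂ)) * (t:ℂ)) • (ρ*Mτ - Mτ*ρ + τ*Mρ - Mρ*τ)
        + (t:ℂ)^2 • (τ*Mτ - Mτ*τ)) (a0, b0) (a1, b1) = 0 := by
      rw [h0]; rfl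
    simp only [Matrix.add_apply, Matrix.smul_apply, Matrix.sub_apply, smul_eq_mul] at hentry
    rw [hA, hB]
    linear_combination hentry - (t : ℂ)^2 * hc
  -- three points kill the quadratic, contradicting the nonzero leading entry
  have h1 := hF δ hδpos hδ1 le_rfl
  have h2 := hF (δ/2) (by linarith) (by linarith) (by linarith)
  have h3 := hF (δ/4) (by linarith) (by linarith) (by linarith)
  push_cast at h2 h3
  have hδc : (δ : ℂ) ≠ 0 := by exact_mod_cast hδpos.ne'
  have hfinal : (3 : ℂ) * (δ : ℂ)^2 * (-6/25) = 0 := by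
    linear_combination (8*(1-(δ:ℂ)/2)*(1-(δ:ℂ)/4)) * h1
      - (24*(1-(δ:ℂ))*(1-(δ:ℂ)/4)) * h2 + (16*(1-(δ:ℂ))*(1-(δ:ℂ)/2)) * h3
  have hsq : (δ : ℂ)^2 = 0 := by linear_combination (-25/18 : ℂ) * hfinal
  exact pow_ne_zero 2 hδc hsq
end
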